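/- arXiv:math/0205016 — 3 statements merged into one kernel-verified Lean document; each statement's English description precedes it below -/
import Mathlib

section
/- Let x̄ be an asymptotically stable equilibrium of the autonomous system ẋ = f(x, ū), with domain of attraction O, and let K be a compact subset of O. Let u be an input defined on [0,∞) with u(t) → ū as t → ∞, and let x(·) be a solution of ẋ(t) = f(x(t), u(t)) defined on all of [0,∞) which is K-recurrent, i.e. for each T > 0 there is some t > T with x(t) ∈ K. Then x(t) → x̄ as t → ∞. -/
open MeasureTheory Metric Set Filter Topology

/-- `x` is a (Carathéodory) solution of the control system `ẋ = f(x, u)` on the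
time interval `I` (assumed to contain `0`), staying in the open state space `X`:
`x` is continuous on `I`, takes values in `X`, and satisfies the integral
equation `x t = x 0 + ∫₀ᵗ f (x s) (u s) ds` on `I`. -/
def IsSolOn {n : ℕ} {U : Type*} [MetricSpace U]
    (X : Set (EuclideanSpace ℝ (Fin n)))
    (f : EuclideanSpace ℝ (Fin n) → U → EuclideanSpace ℝ (Fin n))
    (u : ℝ → U) (x : ℝ → EuclideanSpace ℝ (Fin n)) (I : Set ℝ) : Prop :=
  ContinuousOn x I ∧ (∀ t ∈ I, x t ∈ X) ∧
  (∀ t ∈ I, IntervalIntegrable (fun s => f (x s) (u s)) volume 0 t) ∧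
  (∀ t ∈ I, x t = x 0 + ∫ s in (0:ℝ)..t, f (x s) (u s))

/-- `u` is an admissible input on `[0,∞)`: it is (a.e. strongly) measurable and
locally essentially bounded, i.e. on each compact subinterval of `[0,∞)` it
takes values, up to a null set, in a compact subset of `U`. -/
def IsInput {U : Type*} [MetricSpace U] (u : ℝ → U) : Prop :=
  AEStronglyMeasurable u (volume.restrict (Ici (0:ℝ))) ∧
  ∀ I₀ : Set ℝ, IsCompact I₀ → I₀ ⊆ Ici 0 →
    ∃ K₀ : Set U, IsCompact K₀ ∧ ∀ᵐ t ∂(volume.restrict I₀), u t ∈ K₀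

/-- The (essential) sup norm `‖u‖ = ess sup_{t ≥ 0} dist (u t) ubar` is `< δ`. -/
def SupNormLt {U : Type*} [MetricSpace U] (u : ℝ → U) (ubar : U) (δ : ℝ) : Prop :=
  ∃ b, b < δ ∧ ∀ᵐ t ∂(volume.restrict (Ici (0:ℝ))), dist (u t) ubar ≤ b


section CICSAux

lemma gB_mono {δ K ε : ℝ} (hδ : 0 ≤ δ) (hK : 0 < K) (hε : 0 ≤ ε) :
    Monotone (gronwallBound δ K ε) := by
  have hderiv : ∀ t : ℝ, HasDerivAt (gronwallBound δ K ε)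
      ((K * δ + ε) * Real.exp (K * t)) t := by
    intro t
    have h := hasDerivAt_gronwallBound δ K ε t
    convert h using 1
    rw [gronwallBound_of_K_ne_0 hK.ne']
    field_simp
    ring
  exact monotone_of_deriv_nonneg (fun t => (hderiv t).differentiableAt)
    (fun t => by rw [(hderiv t).deriv]; positivity)

lemma cics_comparison {n : ℕ} {U : Type*} [MetricSpace U]
    (f : EuclideanSpace ℝ (Fin n) → U → EuclideanSpace ℝ (Fin n)) (ubar : U)
    (u : ℝ → U) (x y : ℝ → EuclideanSpace ℝ (Fin n))
    (t₀ T r L η d₀ : ℝ) (hT : 0 ≤ T) (hr : 0 < r) (hL : 0 < L) (hη : 0 ≤ η)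
    (hxc : ContinuousOn x (Icc t₀ (t₀ + T)))
    (hyc : ContinuousOn y (Icc 0 T))
    (hyfc : ContinuousOn (fun σ => f (y σ) ubar) (Icc 0 T))
    (hxint : ∀ t ∈ Icc t₀ (t₀ + T), IntervalIntegrable (fun s => f (x s) (u s)) volume t₀ t)
    (hxeq : ∀ t ∈ Icc t₀ (t₀ + T), x t = x t₀ + ∫ s in t₀..t, f (x s) (u s))
    (hyeq : ∀ t ∈ Icc 0 T, y t = y 0 + ∫ s in (0:ℝ)..t, f (y s) ubar)
    (hLip : ∀ s ∈ Icc (0:ℝ) T, ∀ a ∈ closedBall (y s) r,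
      ‖f a ubar - f (y s) ubar‖ ≤ L * ‖a - y s‖)
    (hpert : ∀ s ∈ Icc t₀ (t₀ + T), ∀ p ∈ closedBall (y (s - t₀)) r,
      ‖f p (u s) - f p ubar‖ ≤ η)
    (hd₀ : ‖x t₀ - y 0‖ ≤ d₀)
    (hsmall : gronwallBound d₀ L η T < r) :
    ∀ t ∈ Icc t₀ (t₀ + T), ‖x t - y (t - t₀)‖ ≤ gronwallBound d₀ L η (t - t₀) := by
  have hd₀0 : 0 ≤ d₀ := le_trans (norm_nonneg _) hd₀
  -- clamp
  set c : ℝ → ℝ := fun t => max t₀ (min t (t₀ + T)) with hc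
  have hcc : Continuous c := continuous_const.max (continuous_id.min continuous_const)
  have hcmem : ∀ t, c t ∈ Icc t₀ (t₀ + T) := by
    intro t
    constructor
    · exact le_max_left _ _
    · exact max_le (by linarith) (min_le_right _ _)
  have hceq : ∀ t ∈ Icc t₀ (t₀ + T), c t = t := by
    intro t ht
    simp only [hc]
    rw [min_eq_left ht.2, max_eq_right ht.1]
  have hcmem' : ∀ t, c t - t₀ ∈ Icc (0:ℝ) T := by
    intro t
    have := hcmem t
    constructor <;> [linarith [this.1]; linarith [this.2]]
  -- deviation function
  set d : ℝ → ℝ := fun t => ‖x (c t) - y (c t - t₀)‖ with hdd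
  have hdcont : Continuous d := by
    apply Continuous.norm
    exact (hxc.comp_continuous hcc hcmem).sub
      (hyc.comp_continuous (hcc.sub continuous_const) hcmem')
  have hdeq : ∀ t ∈ Icc t₀ (t₀ + T), d t = ‖x t - y (t - t₀)‖ := by
    intro t ht; simp only [hdd, hceq t ht]
  have hdnn : ∀ t, 0 ≤ d t := fun t => norm_nonneg _
  -- the key Gronwall estimate, valid on subintervals where d ≤ r
  have key : ∀ t₁ ∈ Icc t₀ (t₀ + T), (∀ s ∈ Icc t₀ t₁, d s ≤ r) →
      ∀ t ∈ Icc t₀ t₁, d t ≤ gronwallBound d₀ L η (t - t₀) := by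
    intro t₁ ht₁ hbnd
    set v : ℝ → ℝ := fun t => d₀ + ∫ s in t₀..t, (L * d s + η) with hv
    have hg : Continuous (fun s => L * d s + η) :=
      (continuous_const.mul hdcont).add continuous_const
    have hv' : ∀ t, HasDerivAt v (L * d t + η) t := by
      intro t
      exact ((hg.integral_hasStrictDerivAt t₀ t).hasDerivAt).const_add d₀
    -- integral inequality : d ≤ v on [t₀, t₁]
    have hdv : ∀ t ∈ Icc t₀ t₁, d t ≤ v t := by
      intro t ht
      have htmem : t ∈ Icc t₀ (t₀ + T) := ⟨ht.1, ht.2.trans ht₁.2⟩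
      have htsub : t - t₀ ∈ Icc (0:ℝ) T := ⟨by linarith [ht.1], by linarith [htmem.2]⟩
      have hyint : IntervalIntegrable (fun s => f (y (s - t₀)) ubar) volume t₀ t := by
        apply ContinuousOn.intervalIntegrable
        apply hyfc.comp (Continuous.continuousOn (continuous_id.sub continuous_const))
        intro s hs
        rw [uIcc_of_le ht.1] at hs
        simp only [Pi.sub_apply, id_eq, Set.mem_Icc]
        constructor <;> linarith [hs.1, hs.2, htmem.2]
      have hxi : IntervalIntegrable (fun s => f (x s) (u s)) volume t₀ t := hxint t htmem
      -- difference identity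
      have hyt : y (t - t₀) = y 0 + ∫ s in t₀..t, f (y (s - t₀)) ubar := by
        have := hyeq (t - t₀) htsub
        rw [this, intervalIntegral.integral_comp_sub_right (fun σ => f (y σ) ubar) t₀]
        norm_num
      have hdiff : x t - y (t - t₀) =
          (x t₀ - y 0) + ∫ s in t₀..t, (f (x s) (u s) - f (y (s - t₀)) ubar) := by
        rw [hxeq t htmem, hyt, intervalIntegral.integral_sub hxi hyint]
        abel
      rw [hdeq t htmem, hdiff]
      refine le_trans (norm_add_le _ _) ?_
      have hbound : ‖∫ s in t₀..t, (f (x s) (u s) - f (y (s - t₀)) ubar)‖ ≤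
          ∫ s in t₀..t, (L * d s + η) := by
        have hae : ∀ᵐ s ∂(volume.restrict (Set.uIoc t₀ t)),
            ‖f (x s) (u s) - f (y (s - t₀)) ubar‖ ≤ L * d s + η := by
          rw [ae_restrict_iff' measurableSet_uIoc]
          apply ae_of_all
          intro s hs
          rw [Set.uIoc_of_le ht.1] at hs
          have hsmem : s ∈ Icc t₀ t₁ := ⟨hs.1.le, hs.2.trans ht.2⟩
          have hsmem' : s ∈ Icc t₀ (t₀ + T) := ⟨hsmem.1, hsmem.2.trans ht₁.2⟩
          have hssub : s - t₀ ∈ Icc (0:ℝ) T := ⟨by linarith [hsmem.1], by linarith [hsmem'.2]⟩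
          have hds : d s = ‖x s - y (s - t₀)‖ := hdeq s hsmem'
          have hball : x s ∈ closedBall (y (s - t₀)) r := by
            rw [mem_closedBall_iff_norm]
            rw [← hds]; exact hbnd s hsmem
          calc ‖f (x s) (u s) - f (y (s - t₀)) ubar‖
              ≤ ‖f (x s) (u s) - f (x s) ubar‖ + ‖f (x s) ubar - f (y (s - t₀)) ubar‖ := by
                have : f (x s) (u s) - f (y (s - t₀)) ubar =
                  (f (x s) (u s) - f (x s) ubar) + (f (x s) ubar - f (y (s - t₀)) ubar) := by abel
                rw [this]; exact norm_add_le _ _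
            _ ≤ η + L * ‖x s - y (s - t₀)‖ :=
                add_le_add (hpert s hsmem' (x s) hball) (hLip (s - t₀) hssub (x s) hball)
            _ = L * d s + η := by rw [hds]; ring
        refine le_trans (intervalIntegral.norm_integral_le_abs_of_norm_le hae
          (hg.intervalIntegrable _ _)) ?_
        rw [abs_of_nonneg]
        apply intervalIntegral.integral_nonneg ht.1
        intro s _
        have := hdnn s
        positivity
      calc ‖x t₀ - y 0‖ + ‖∫ s in t₀..t, (f (x s) (u s) - f (y (s - t₀)) ubar)‖
          ≤ d₀ + ∫ s in t₀..t, (L * d s + η) := add_le_add hd₀ hbound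
        _ = v t := rfl
    -- Gronwall on v
    have hvG : ∀ t ∈ Icc t₀ t₁, ‖v t‖ ≤ gronwallBound d₀ L η (t - t₀) := by
      apply norm_le_gronwallBound_of_norm_deriv_right_le
        (f' := fun t => L * d t + η) (K := L) (ε := η)
      · exact fun t _ => (hv' t).continuousAt.continuousWithinAt
      · exact fun t _ => (hv' t).hasDerivWithinAt
      · simp only [hv, intervalIntegral.integral_same, add_zero]
        rw [Real.norm_of_nonneg hd₀0]
      · intro t ht
        have h1 : d t ≤ v t := hdv t ⟨ht.1, ht.2.le⟩
        have h2 : 0 ≤ L * d t + η := by have := hdnn t; positivity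
        rw [Real.norm_of_nonneg h2]
        have : v t ≤ ‖v t‖ := le_abs_self _
        nlinarith [hdnn t]
    intro t ht
    calc d t ≤ v t := hdv t ht
      _ ≤ ‖v t‖ := le_abs_self _
      _ ≤ gronwallBound d₀ L η (t - t₀) := hvG t ht
  -- continuation argument
  have hd₀r : d t₀ < r := by
    have h1 : d t₀ ≤ d₀ := by
      rw [hdeq t₀ ⟨le_refl _, by linarith⟩, sub_self]; exact hd₀
    have h2 : d₀ ≤ gronwallBound d₀ L η T := by
      have := gB_mono hd₀0 hL hη hT
      rwa [gronwallBound_x0] at this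
    linarith
  set A : Set ℝ := {t : ℝ | t ∈ Icc t₀ (t₀ + T) ∧ ∀ s ∈ Icc t₀ t, d s ≤ r} with hA
  have hAne : t₀ ∈ A := by
    refine ⟨⟨le_refl _, by linarith⟩, ?_⟩
    intro s hs
    have : s = t₀ := le_antisymm hs.2 hs.1
    rw [this]; exact hd₀r.le
  have hAbdd : BddAbove A := ⟨t₀ + T, fun t ht => ht.1.2⟩
  set c₁ := sSup A with hc₁
  have hc₁mem : c₁ ∈ Icc t₀ (t₀ + T) :=
    ⟨le_csSup hAbdd hAne, csSup_le ⟨t₀, hAne⟩ (fun t ht => ht.1.2)⟩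
  have hc₁A : c₁ ∈ A := by
    refine ⟨hc₁mem, ?_⟩
    intro s hs
    rcases lt_or_ge s c₁ with hlt | hge
    · obtain ⟨t, htA, hst⟩ := exists_lt_of_lt_csSup ⟨t₀, hAne⟩ hlt
      exact htA.2 s ⟨hs.1, hst.le⟩
    · have hseq : s = c₁ := le_antisymm hs.2 hge
      rcases eq_or_lt_of_le hs.1 with heq' | hlt'
      · rw [← heq']; exact hd₀r.le
      · have hev : ∀ z ∈ Ico t₀ s, d z ≤ r := by
          intro z hz
          have hzc : z < c₁ := hseq ▸ hz.2
          obtain ⟨t, htA, hzt⟩ := exists_lt_of_lt_csSup ⟨t₀, hAne⟩ hzc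
          exact htA.2 z ⟨hz.1, hzt.le⟩
        have hlim : Tendsto d (𝓝[<] s) (𝓝 (d s)) :=
          hdcont.continuousAt.continuousWithinAt
        refine le_of_tendsto hlim ?_
        filter_upwards [Ioo_mem_nhdsLT_of_mem (⟨hlt', le_refl s⟩ : s ∈ Ioc t₀ s)] with z hz
        exact hev z ⟨hz.1.le, hz.2⟩
  have hc₁top : c₁ = t₀ + T := by
    by_contra hne
    have hlt : c₁ < t₀ + T := lt_of_le_of_ne hc₁mem.2 hne
    have hdc₁ : d c₁ < r := by
      have := key c₁ hc₁mem hc₁A.2 c₁ ⟨hc₁mem.1, le_refl _⟩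
      have hmono := gB_mono hd₀0 hL hη (show c₁ - t₀ ≤ T by linarith [hc₁mem.2])
      linarith
    -- extend beyond c₁
    have : {t : ℝ | d t < r} ∈ 𝓝 c₁ := by
      apply IsOpen.mem_nhds
      · exact isOpen_lt hdcont continuous_const
      · exact hdc₁
    obtain ⟨e, he, hball⟩ := Metric.mem_nhds_iff.1 this
    set c₂ := min (c₁ + e / 2) (t₀ + T) with hc₂
    have hc₂gt : c₁ < c₂ := lt_min (by linarith) hlt
    have hc₂A : c₂ ∈ A := by
      refine ⟨⟨hc₁mem.1.trans hc₂gt.le, min_le_right _ _⟩, ?_⟩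
      intro s hs
      rcases le_or_gt s c₁ with h | h
      · exact hc₁A.2 s ⟨hs.1, h⟩
      · apply le_of_lt
        apply hball
        rw [mem_ball]
        have : s ≤ c₁ + e / 2 := hs.2.trans (min_le_left _ _)
        rw [Real.dist_eq, abs_of_pos (by linarith)]
        linarith
    have := le_csSup hAbdd hc₂A
    rw [← hc₁] at this
    linarith
  intro t ht
  have := key c₁ hc₁mem hc₁A.2 t (by rw [hc₁top]; exact ht)
  rwa [hdeq t ht] at this

variable {n : ℕ} {U : Type*} [MetricSpace U]

local notation "E" => EuclideanSpace ℝ (Fin n)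

/-- Uniform local Lipschitz bound near a compact set. -/
lemma unif_lip (X : Set E) (f : E → U → E) (ubar : U)
    (hflip : ∀ ξ ∈ X, ∃ V ∈ 𝓝 ξ, ∃ L : ℝ,
      ∀ a ∈ V, ∀ z ∈ V, ‖f a ubar - f z ubar‖ ≤ L * ‖a - z‖)
    (R : Set E) (hR : IsCompact R) (hRX : R ⊆ X) :
    ∃ r > 0, ∃ L > 0, ∀ p ∈ R, ∀ a ∈ closedBall p r, ∀ z ∈ closedBall p r,
      ‖f a ubar - f z ubar‖ ≤ L * ‖a - z‖ := by
  -- choose per-point data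
  have hdata : ∀ p ∈ R, ∃ ρ > 0, ∃ L : ℝ,
      ∀ a ∈ closedBall p (2 * ρ), ∀ z ∈ closedBall p (2 * ρ),
        ‖f a ubar - f z ubar‖ ≤ L * ‖a - z‖ := by
    intro p hp
    obtain ⟨V, hV, L, hL⟩ := hflip p (hRX hp)
    obtain ⟨ρ₀, hρ₀, hball⟩ := Metric.mem_nhds_iff.1 hV
    refine ⟨ρ₀ / 3, by linarith, L, ?_⟩
    intro a ha z hz
    have ha' : a ∈ V := hball (by
      rw [mem_ball]; have := mem_closedBall.1 ha; linarith)
    have hz' : z ∈ V := hball (by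
      rw [mem_ball]; have := mem_closedBall.1 hz; linarith)
    exact hL a ha' z hz'
  choose! ρ hρ L' hL' using hdata
  rcases R.eq_empty_or_nonempty with hRe | hRne
  · exact ⟨1, one_pos, 1, one_pos, by simp [hRe]⟩
  obtain ⟨t, htR, hcov⟩ := hR.elim_nhds_subcover (fun p => ball p (ρ p))
    (fun p hp => ball_mem_nhds p (hρ p hp))
  rcases t.eq_empty_or_nonempty with hte | htne
  · -- then R ⊆ ∅, contradiction with nonempty
    exfalso
    obtain ⟨p, hp⟩ := hRne
    have := hcov hp
    simp [hte] at this
  set r := t.inf' htne ρ with hr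
  set L := t.sup' htne (fun q => max (L' q) 1) with hL
  have hrpos : 0 < r := by
    rw [hr, Finset.lt_inf'_iff]
    exact fun q hq => hρ q (htR q hq)
  have hLpos : 0 < L := by
    rw [hL, Finset.lt_sup'_iff]
    obtain ⟨q, hq⟩ := htne
    exact ⟨q, hq, lt_of_lt_of_le one_pos (le_max_right _ _)⟩
  refine ⟨r, hrpos, L, hLpos, ?_⟩
  intro p hp a ha z hz
  obtain ⟨q, hq, hpq⟩ := mem_iUnion₂.1 (hcov hp)
  have hrq : r ≤ ρ q := Finset.inf'_le ρ hq
  have hqR : q ∈ R := htR q hq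
  have hmem : ∀ w, w ∈ closedBall p r → w ∈ closedBall q (2 * ρ q) := by
    intro w hw
    rw [mem_closedBall] at hw ⊢
    have h1 : dist p q < ρ q := mem_ball.1 hpq
    calc dist w q ≤ dist w p + dist p q := dist_triangle _ _ _
      _ ≤ 2 * ρ q := by linarith
  have := hL' q hqR a (hmem a ha) z (hmem z hz)
  calc ‖f a ubar - f z ubar‖ ≤ L' q * ‖a - z‖ := this
    _ ≤ L * ‖a - z‖ := by
      apply mul_le_mul_of_nonneg_right _ (norm_nonneg _)
      exact le_trans (le_max_left _ _) (Finset.le_sup' (fun q => max (L' q) 1) hq)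

/-- Uniform continuity of `f` in the input near `ubar`, over a compact set of states. -/
lemma unif_cont (X : Set E) (f : E → U → E) (ubar : U) (hX : IsOpen X)
    (hfc : ContinuousOn (fun p : E × U => f p.1 p.2) (X ×ˢ (univ : Set U)))
    (R : Set E) (hR : IsCompact R) (hRX : R ⊆ X) (η : ℝ) (hη : 0 < η) :
    ∃ rad > 0, ∀ p ∈ R, ∀ μ : U, dist μ ubar ≤ rad → ‖f p μ - f p ubar‖ ≤ η := by
  have hdata : ∀ p ∈ R, ∃ ρ > 0, ∀ a ∈ ball p ρ, ∀ μ : U, dist μ ubar < ρ →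
      ‖f a μ - f p ubar‖ < η / 2 := by
    intro p hp
    have hca : ContinuousAt (fun q : E × U => f q.1 q.2) (p, ubar) :=
      hfc.continuousAt ((hX.prod isOpen_univ).mem_nhds ⟨hRX hp, mem_univ _⟩)
    obtain ⟨ρ, hρ, hd⟩ := Metric.continuousAt_iff.1 hca (η / 2) (by positivity)
    refine ⟨ρ, hρ, ?_⟩
    intro a ha μ hμ
    have : dist ((a, μ) : E × U) (p, ubar) < ρ := by
      rw [Prod.dist_eq, max_lt_iff]
      exact ⟨mem_ball.1 ha, hμ⟩
    have := hd this
    rwa [dist_eq_norm] at this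
  choose! ρ hρ hest using hdata
  rcases R.eq_empty_or_nonempty with hRe | hRne
  · exact ⟨1, one_pos, by simp [hRe]⟩
  obtain ⟨t, htR, hcov⟩ := hR.elim_nhds_subcover (fun p => ball p (ρ p / 2))
    (fun p hp => ball_mem_nhds p (by have := hρ p hp; linarith))
  rcases t.eq_empty_or_nonempty with hte | htne
  · exfalso
    obtain ⟨p, hp⟩ := hRne
    have := hcov hp
    simp [hte] at this
  set rad := t.inf' htne (fun q => ρ q / 2) with hrad
  have hradpos : 0 < rad := by
    rw [hrad, Finset.lt_inf'_iff]
    intro q hq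
    have := hρ q (htR q hq); linarith
  refine ⟨rad, hradpos, ?_⟩
  intro p hp μ hμ
  obtain ⟨q, hq, hpq⟩ := mem_iUnion₂.1 (hcov hp)
  have hqR : q ∈ R := htR q hq
  have hradq : rad ≤ ρ q / 2 := Finset.inf'_le _ hq
  have hρq := hρ q hqR
  have hpball : p ∈ ball q (ρ q) := by
    rw [mem_ball] at hpq ⊢; linarith
  have h1 : ‖f p μ - f q ubar‖ < η / 2 := hest q hqR p hpball μ (by linarith)
  have h2 : ‖f p ubar - f q ubar‖ < η / 2 :=
    hest q hqR p hpball ubar (by rw [dist_self]; linarith)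
  calc ‖f p μ - f p ubar‖ ≤ ‖f p μ - f q ubar‖ + ‖f p ubar - f q ubar‖ := by
        have : f p μ - f p ubar = (f p μ - f q ubar) - (f p ubar - f q ubar) := by abel
        rw [this]; exact norm_sub_le _ _
    _ ≤ η := by linarith

/-- Window lemma: near a finite piece of a reference autonomous trajectory,
any solution with nearby initial state and small input perturbation stays close. -/
lemma cics_window (X : Set E) (f : E → U → E) (ubar : U)
    (hX : IsOpen X)
    (hfc : ContinuousOn (fun p : E × U => f p.1 p.2) (X ×ˢ (univ : Set U)))
    (hflip' : ∀ ξ ∈ X, ∃ V ∈ 𝓝 ξ, ∃ L : ℝ,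
      ∀ a ∈ V, ∀ z ∈ V, ‖f a ubar - f z ubar‖ ≤ L * ‖a - z‖)
    (y : ℝ → E) (hy : IsSolOn X f (fun _ => ubar) y (Ici 0))
    (T : ℝ) (hT : 0 ≤ T) (εdev : ℝ) (hεdev : 0 < εdev) :
    ∃ ρ > 0, ∃ rad > 0, ∀ u : ℝ → U, ∀ x : ℝ → E, IsSolOn X f u x (Ici 0) →
      ∀ t₀ ≥ (0:ℝ), ‖x t₀ - y 0‖ ≤ ρ →
      (∀ s ∈ Icc t₀ (t₀ + T), dist (u s) ubar ≤ rad) →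
      ∀ τ ∈ Icc t₀ (t₀ + T), ‖x τ - y (τ - t₀)‖ < εdev := by
  have hIccIci : Icc (0:ℝ) T ⊆ Ici 0 := fun s hs => hs.1
  -- the compact reference trajectory
  set R : Set E := y '' Icc 0 T with hRdef
  have hycont : ContinuousOn y (Icc 0 T) := hy.1.mono hIccIci
  have hR : IsCompact R := (isCompact_Icc).image_of_continuousOn hycont
  have hRX : R ⊆ X := by
    rintro _ ⟨s, hs, rfl⟩
    exact hy.2.1 s (hIccIci hs)
  obtain ⟨r₀, hr₀, L, hL, hLip₀⟩ := unif_lip X f ubar hflip' R hR hRX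
  obtain ⟨rt, hrt, htube⟩ := hR.exists_cthickening_subset_open hX hRX
  set r : ℝ := min r₀ rt with hrdef
  have hrpos : 0 < r := lt_min hr₀ hrt
  set m : ℝ := min r εdev with hmdef
  have hmpos : 0 < m := lt_min hrpos hεdev
  set ρ : ℝ := m * Real.exp (-(L * T)) / 4 with hρdef
  set η : ℝ := L * m * Real.exp (-(L * T)) / 4 with hηdef
  have hρpos : 0 < ρ := by positivity
  have hηpos : 0 < η := by positivity
  -- the Gronwall bound is at most m/2
  have hgB : gronwallBound ρ L η T ≤ m / 2 := by
    rw [gronwallBound_of_K_ne_0 hL.ne']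
    have hexp : 0 < Real.exp (L * T) := Real.exp_pos _
    have hinv : Real.exp (-(L * T)) * Real.exp (L * T) = 1 := by
      rw [← Real.exp_add]; simp
    have h1 : ρ * Real.exp (L * T) = m / 4 := by
      rw [hρdef]; field_simp; nlinarith [hinv]
    have h2 : η / L * (Real.exp (L * T) - 1) ≤ m / 4 := by
      have hηL : η / L = m * Real.exp (-(L * T)) / 4 := by
        rw [hηdef]; field_simp
      rw [hηL]
      have hfac : 0 ≤ m * Real.exp (-(L * T)) / 4 := by positivity
      calc m * Real.exp (-(L * T)) / 4 * (Real.exp (L * T) - 1)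
          ≤ m * Real.exp (-(L * T)) / 4 * Real.exp (L * T) := by nlinarith [hexp]
        _ = m / 4 := by nlinarith [hinv]
    linarith
  -- the compact tube around the trajectory
  set Rt : Set E := cthickening r R with hRtdef
  have hRtcomp : IsCompact Rt :=
    isCompact_of_isClosed_isBounded isClosed_cthickening (hR.isBounded.cthickening)
  have hRtX : Rt ⊆ X := le_trans (cthickening_mono (min_le_right _ _) R) htube
  obtain ⟨rad, hrad, hpert₀⟩ := unif_cont X f ubar hX hfc Rt hRtcomp hRtX η hηpos
  refine ⟨ρ, hρpos, rad, hrad, ?_⟩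
  intro u x hx t₀ ht₀ hinit hu
  have hIccIci' : Icc t₀ (t₀ + T) ⊆ Ici 0 := fun s hs => le_trans ht₀ hs.1
  have hint : ∀ t ∈ Icc t₀ (t₀ + T),
      IntervalIntegrable (fun s => f (x s) (u s)) volume t₀ t := by
    intro t ht
    exact (hx.2.2.1 t₀ ht₀).symm.trans (hx.2.2.1 t (hIccIci' ht))
  have hxeq : ∀ t ∈ Icc t₀ (t₀ + T), x t = x t₀ + ∫ s in t₀..t, f (x s) (u s) := by
    intro t ht
    have h1 := hx.2.2.2 t (hIccIci' ht)
    have h2 := hx.2.2.2 t₀ ht₀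
    have h3 := intervalIntegral.integral_add_adjacent_intervals
      (hx.2.2.1 t₀ ht₀) (hint t ht)
    rw [h1, h2, ← h3]
    abel
  have hyfc : ContinuousOn (fun σ => f (y σ) ubar) (Icc 0 T) := by
    apply hfc.comp (hycont.prodMk continuousOn_const)
    intro s hs
    exact ⟨hRX ⟨s, hs, rfl⟩, mem_univ _⟩
  have hcomp := cics_comparison f ubar u x y t₀ T r L η ρ hT hrpos hL hηpos.le
    (hx.1.mono hIccIci') hycont hyfc hint hxeq
    (fun t ht => hy.2.2.2 t (hIccIci ht))
    ?_ ?_ hinit (lt_of_le_of_lt hgB (by have h := min_le_left r εdev; have : m ≤ r := h; linarith))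
  · intro τ hτ
    have h1 := hcomp τ hτ
    have h2 : gronwallBound ρ L η (τ - t₀) ≤ gronwallBound ρ L η T :=
      gB_mono hρpos.le hL hηpos.le (by linarith [hτ.2])
    have hm2 : m ≤ εdev := min_le_right _ _
    linarith
  · -- Lipschitz along trajectory
    intro s hs a ha
    exact hLip₀ (y s) ⟨s, hs, rfl⟩ a
      (closedBall_subset_closedBall (min_le_left _ _) ha)
      (y s) (mem_closedBall_self hr₀.le)
  · -- perturbation bound
    intro s hs p hp
    have hyin : y (s - t₀) ∈ R := ⟨s - t₀, ⟨by linarith [hs.1], by linarith [hs.2]⟩, rfl⟩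
    have hpin : p ∈ Rt := by
      apply mem_cthickening_of_dist_le p (y (s - t₀)) r R hyin
      exact mem_closedBall.1 hp
    exact hpert₀ p hpin (u s) (hu s hs)

/-- Uniqueness of autonomous solutions. -/
lemma cics_unique (X : Set E) (f : E → U → E) (ubar : U)
    (hX : IsOpen X)
    (hfc : ContinuousOn (fun p : E × U => f p.1 p.2) (X ×ˢ (univ : Set U)))
    (hflip' : ∀ ξ ∈ X, ∃ V ∈ 𝓝 ξ, ∃ L : ℝ,
      ∀ a ∈ V, ∀ z ∈ V, ‖f a ubar - f z ubar‖ ≤ L * ‖a - z‖)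
    (y₁ y₂ : ℝ → E) (h₁ : IsSolOn X f (fun _ => ubar) y₁ (Ici 0))
    (h₂ : IsSolOn X f (fun _ => ubar) y₂ (Ici 0)) (h0 : y₁ 0 = y₂ 0) :
    ∀ t ≥ (0:ℝ), y₁ t = y₂ t := by
  intro t ht
  have hkey : ∀ εdev > 0, ‖y₂ t - y₁ t‖ < εdev := by
    intro εdev hε
    obtain ⟨ρ, hρ, rad, hrad, hw⟩ :=
      cics_window X f ubar hX hfc hflip' y₁ h₁ t ht εdev hε
    have := hw (fun _ => ubar) y₂ h₂ 0 le_rfl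
      (by rw [← h0, sub_self, norm_zero]; exact hρ.le)
      (fun s _ => by simp [hrad.le]) t ⟨by linarith, by linarith⟩
    simpa using this
  by_contra hne
  have hpos : 0 < ‖y₂ t - y₁ t‖ := by
    rw [norm_pos_iff, sub_ne_zero]
    exact fun h => hne h.symm
  exact lt_irrefl _ (hkey _ hpos)

/-- Finite-cover step lemma: from any point of a compact set `C` whose points all
admit converging autonomous solutions (with extra property `Q`), the perturbed
solution comes within `δ/2` of `xbar` after a bounded time, staying `δ/2`-close to
reference trajectories meanwhile. -/
lemma cics_cover (X : Set E) (f : E → U → E) (ubar : U) (xbar : E)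
    (hX : IsOpen X)
    (hfc : ContinuousOn (fun p : E × U => f p.1 p.2) (X ×ˢ (univ : Set U)))
    (hflip' : ∀ ξ ∈ X, ∃ V ∈ 𝓝 ξ, ∃ L : ℝ,
      ∀ a ∈ V, ∀ z ∈ V, ‖f a ubar - f z ubar‖ ≤ L * ‖a - z‖)
    (δ : ℝ) (hδ : 0 < δ) (Q : (ℝ → E) → Prop)
    (C : Set E) (hC : IsCompact C)
    (hCy : ∀ ξ ∈ C, ∃ y, IsSolOn X f (fun _ => ubar) y (Ici 0) ∧ y 0 = ξ ∧
      Tendsto y atTop (𝓝 xbar) ∧ Q y) :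
    ∃ rad > 0, ∃ Tmax ≥ (1:ℝ),
      ∀ u : ℝ → U, ∀ x : ℝ → E, IsSolOn X f u x (Ici 0) → ∀ t₀ ≥ (0:ℝ), x t₀ ∈ C →
      (∀ s ∈ Icc t₀ (t₀ + Tmax), dist (u s) ubar ≤ rad) →
      ∃ T, 1 ≤ T ∧ T ≤ Tmax ∧ dist (x (t₀ + T)) xbar ≤ δ / 2 ∧
        ∀ τ ∈ Icc t₀ (t₀ + T), ∃ y, (IsSolOn X f (fun _ => ubar) y (Ici 0) ∧
          y 0 ∈ C ∧ Q y) ∧ ‖x τ - y (τ - t₀)‖ < δ / 2 := by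
  classical
  rcases C.eq_empty_or_nonempty with hCe | hCne
  · exact ⟨1, one_pos, 1, le_refl _, by intro u x _ t₀ _ hmem; rw [hCe] at hmem; simp at hmem⟩
  choose! y hysol hy0 hyt hyQ using hCy
  -- per-point reach time
  have hTdata : ∀ ξ ∈ C, ∃ T ≥ (1:ℝ), dist (y ξ T) xbar < δ / 4 := by
    intro ξ hξ
    obtain ⟨N, hN⟩ := (Metric.tendsto_atTop.1 (hyt ξ hξ)) (δ / 4) (by positivity)
    exact ⟨max N 1, le_max_right _ _, hN _ (le_max_left _ _)⟩
  choose! Tt hTt1 hTtδ using hTdata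
  -- per-point window data
  have hwdata : ∀ ξ ∈ C, ∃ ρ > 0, ∃ rad > 0,
      ∀ u : ℝ → U, ∀ x : ℝ → E, IsSolOn X f u x (Ici 0) →
      ∀ t₀ ≥ (0:ℝ), ‖x t₀ - y ξ 0‖ ≤ ρ →
      (∀ s ∈ Icc t₀ (t₀ + Tt ξ), dist (u s) ubar ≤ rad) →
      ∀ τ ∈ Icc t₀ (t₀ + Tt ξ), ‖x τ - y ξ (τ - t₀)‖ < δ / 4 := by
    intro ξ hξ
    exact cics_window X f ubar hX hfc hflip' (y ξ) (hysol ξ hξ) (Tt ξ)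
      (by linarith [hTt1 ξ hξ]) (δ / 4) (by positivity)
  choose! ρ hρpos rad hradpos hwin using hwdata
  obtain ⟨t, htC, hcov⟩ := hC.elim_nhds_subcover (fun ξ => ball ξ (ρ ξ))
    (fun ξ hξ => ball_mem_nhds ξ (hρpos ξ hξ))
  rcases t.eq_empty_or_nonempty with hte | htne
  · exfalso
    obtain ⟨p, hp⟩ := hCne
    have := hcov hp
    simp [hte] at this
  set radm := t.inf' htne rad with hradm
  set Tmax := t.sup' htne Tt with hTmax
  have hradmpos : 0 < radm := by
    rw [hradm, Finset.lt_inf'_iff]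
    exact fun q hq => hradpos q (htC q hq)
  have hTmax1 : 1 ≤ Tmax := by
    obtain ⟨q, hq⟩ := htne
    exact le_trans (hTt1 q (htC q hq)) (Finset.le_sup' Tt hq)
  refine ⟨radm, hradmpos, Tmax, hTmax1, ?_⟩
  intro u x hx t₀ ht₀ hmem hu
  obtain ⟨ξ, hξt, hξball⟩ := mem_iUnion₂.1 (hcov hmem)
  have hξC : ξ ∈ C := htC ξ hξt
  have hT1 : 1 ≤ Tt ξ := hTt1 ξ hξC
  have hTle : Tt ξ ≤ Tmax := Finset.le_sup' Tt hξt
  have hradle : radm ≤ rad ξ := Finset.inf'_le rad hξt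
  have hu' : ∀ s ∈ Icc t₀ (t₀ + Tt ξ), dist (u s) ubar ≤ rad ξ := by
    intro s hs
    exact le_trans (hu s ⟨hs.1, le_trans hs.2 (by linarith)⟩) hradle
  have hinit : ‖x t₀ - y ξ 0‖ ≤ ρ ξ := by
    rw [← dist_eq_norm, hy0 ξ hξC]
    exact (mem_ball.1 hξball).le
  have hdev := hwin ξ hξC u x hx t₀ ht₀ hinit hu'
  refine ⟨Tt ξ, hT1, hTle, ?_, ?_⟩
  · have h1 := hdev (t₀ + Tt ξ) ⟨by linarith, le_refl _⟩
    have h2 : dist (x (t₀ + Tt ξ)) (y ξ (Tt ξ)) < δ / 4 := by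
      rw [dist_eq_norm]
      simpa using h1
    calc dist (x (t₀ + Tt ξ)) xbar
        ≤ dist (x (t₀ + Tt ξ)) (y ξ (Tt ξ)) + dist (y ξ (Tt ξ)) xbar := dist_triangle _ _ _
      _ ≤ δ / 2 := by have := hTtδ ξ hξC; linarith
  · intro τ hτ
    refine ⟨y ξ, ⟨hysol ξ hξC, ?_, hyQ ξ hξC⟩, ?_⟩
    · rw [hy0 ξ hξC]; exact hξC
    · have := hdev τ hτ; linarith

end CICSAux

/-- **Theorem 1 (convergence part).** If `x̄` is an asymptotically stable
equilibrium of `ẋ = f(x, ū)` with domain of attraction `O`, `K ⊆ O` is compact,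
`u` is an input with `u(t) → ū`, and `x(·)` is a `K`-recurrent solution of
`ẋ = f(x, u)` on `[0,∞)`, then `x(t) → x̄` as `t → ∞`. -/
theorem cics_convergence {n : ℕ} {U : Type*} [MetricSpace U]
    (X : Set (EuclideanSpace ℝ (Fin n)))
    (f : EuclideanSpace ℝ (Fin n) → U → EuclideanSpace ℝ (Fin n))
    (xbar : EuclideanSpace ℝ (Fin n)) (ubar : U)
    (O : Set (EuclideanSpace ℝ (Fin n)))
    -- the state space is open, contains the equilibrium, and `f(x̄, ū) = 0`
    (hX : IsOpen X) (hxbar : xbar ∈ X) (heq : f xbar ubar = 0)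
    -- `f` is continuous, and locally Lipschitz in `x` uniformly on compacts of `U`
    (hfc : ContinuousOn (fun p : EuclideanSpace ℝ (Fin n) × U => f p.1 p.2)
      (X ×ˢ (univ : Set U)))
    (hflip : ∀ ξ ∈ X, ∀ K₀ : Set U, IsCompact K₀ → ∃ V ∈ 𝓝 ξ, ∃ L : ℝ,
      ∀ x ∈ V, ∀ z ∈ V, ∀ μ ∈ K₀, ‖f x μ - f z μ‖ ≤ L * ‖x - z‖)
    -- `x̄` is a stable equilibrium of `ẋ = f(x, ū)` ...
    (hstab : ∀ ε > 0, ∃ δ > 0, ∀ ξ ∈ X, dist ξ xbar ≤ δ →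
      ∃ y, IsSolOn X f (fun _ => ubar) y (Ici 0) ∧ y 0 = ξ ∧
        ∀ t ≥ (0:ℝ), dist (y t) xbar < ε)
    -- ... whose domain of attraction is `O`, a neighborhood of `x̄`
    (hO : O = {ξ | ∃ y, IsSolOn X f (fun _ => ubar) y (Ici 0) ∧ y 0 = ξ ∧
      Tendsto y atTop (𝓝 xbar)})
    (hOnhd : O ∈ 𝓝 xbar)
    (K : Set (EuclideanSpace ℝ (Fin n))) (hK : IsCompact K) (hKO : K ⊆ O)
    (u : ℝ → U) (hu : IsInput u) (hulim : Tendsto u atTop (𝓝 ubar))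
    (x : ℝ → EuclideanSpace ℝ (Fin n)) (hx : IsSolOn X f u x (Ici 0))
    (hrec : ∀ T > (0:ℝ), ∃ t > T, x t ∈ K) :
    Tendsto x atTop (𝓝 xbar) := by
  classical
  have hflip' : ∀ ξ ∈ X, ∃ V ∈ 𝓝 ξ, ∃ L : ℝ, ∀ a ∈ V, ∀ z ∈ V,
      ‖f a ubar - f z ubar‖ ≤ L * ‖a - z‖ := by
    intro ξ hξ
    obtain ⟨V, hV, L, hL⟩ := hflip ξ hξ {ubar} isCompact_singleton
    exact ⟨V, hV, L, fun a ha z hz => hL a ha z hz ubar rfl⟩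
  rw [Metric.tendsto_atTop]
  intro ε hε
  obtain ⟨εX, hεX, hball⟩ : ∃ εX > 0, closedBall xbar εX ⊆ X ∩ O :=
    Metric.nhds_basis_closedBall.mem_iff.1 (inter_mem (hX.mem_nhds hxbar) hOnhd)
  set ε1 : ℝ := min (ε / 2) εX with hε1def
  have hε1 : 0 < ε1 := lt_min (by positivity) hεX
  have hε1ε : ε1 ≤ ε / 2 := min_le_left _ _
  obtain ⟨δs, hδs, hstab'⟩ := hstab (ε1 / 2) (by positivity)
  set δ : ℝ := min (min δs εX) (ε1 / 2) with hδdef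
  have hδpos : 0 < δ := lt_min (lt_min hδs hεX) (by positivity)
  have hδεX : δ ≤ εX := le_trans (min_le_left _ _) (min_le_right _ _)
  have hδs' : δ ≤ δs := le_trans (min_le_left _ _) (min_le_left _ _)
  have hδε1 : δ ≤ ε1 / 2 := min_le_right _ _
  have hballX : closedBall xbar δ ⊆ X :=
    fun z hz => (hball (closedBall_subset_closedBall hδεX hz)).1
  have hballO : closedBall xbar δ ⊆ O :=
    fun z hz => (hball (closedBall_subset_closedBall hδεX hz)).2
  -- trap data
  have htrapdata : ∀ ξ ∈ closedBall xbar δ, ∃ y, IsSolOn X f (fun _ => ubar) y (Ici 0) ∧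
      y 0 = ξ ∧ Tendsto y atTop (𝓝 xbar) ∧ (∀ t ≥ (0:ℝ), dist (y t) xbar < ε1 / 2) := by
    intro ξ hξ
    have hξO := hballO hξ
    rw [hO] at hξO
    obtain ⟨yc, hyc, hyc0, hyct⟩ := hξO
    obtain ⟨ys, hys, hys0, hstay⟩ := hstab' ξ (hballX hξ)
      (le_trans (mem_closedBall.1 hξ) hδs')
    have huniq := cics_unique X f ubar hX hfc hflip' yc ys hyc hys (by rw [hyc0, hys0])
    exact ⟨yc, hyc, hyc0, hyct, fun t ht => by rw [huniq t ht]; exact hstay t ht⟩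
  obtain ⟨radT, hradT, TmaxT, hTmaxT, stepT⟩ := cics_cover X f ubar xbar hX hfc hflip'
    δ hδpos (fun y => ∀ t ≥ (0:ℝ), dist (y t) xbar < ε1 / 2) (closedBall xbar δ)
    (isCompact_closedBall _ _) htrapdata
  -- entry data
  have hentrydata : ∀ ξ ∈ K, ∃ y, IsSolOn X f (fun _ => ubar) y (Ici 0) ∧
      y 0 = ξ ∧ Tendsto y atTop (𝓝 xbar) ∧ True := by
    intro ξ hξ
    have hmem := hKO hξ
    rw [hO] at hmem
    obtain ⟨y, h1, h2, h3⟩ := hmem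
    exact ⟨y, h1, h2, h3, trivial⟩
  obtain ⟨radE, hradE, TmaxE, hTmaxE, stepE⟩ := cics_cover X f ubar xbar hX hfc hflip'
    δ hδpos (fun _ => True) K hK hentrydata
  -- input threshold
  obtain ⟨N, hN⟩ := Metric.tendsto_atTop.1 hulim (min radT radE) (lt_min hradT hradE)
  set S : ℝ := max N 0 with hSdef
  have hS0 : (0:ℝ) ≤ S := le_max_right _ _
  have hS : ∀ s ≥ S, dist (u s) ubar ≤ min radT radE :=
    fun s hs => (hN s (le_trans (le_max_left _ _) hs)).le
  -- trap step
  set P : ℝ → Prop := fun t₀ => S ≤ t₀ ∧ x t₀ ∈ closedBall xbar δ with hPdef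
  have step : ∀ t₀, P t₀ → ∃ T, 1 ≤ T ∧ P (t₀ + T) ∧
      ∀ τ ∈ Icc t₀ (t₀ + T), dist (x τ) xbar < ε := by
    intro t₀ hP
    have ht₀0 : (0:ℝ) ≤ t₀ := le_trans hS0 hP.1
    obtain ⟨T, hT1, hTle, hend, hdur⟩ := stepT u x hx t₀ ht₀0 hP.2
      (fun s hs => le_trans (hS s (le_trans hP.1 hs.1)) (min_le_left _ _))
    refine ⟨T, hT1, ⟨by linarith [hP.1], mem_closedBall.2 (by linarith)⟩, ?_⟩
    intro τ hτ
    obtain ⟨y, ⟨hysol, hy0C, hQ⟩, hdev⟩ := hdur τ hτ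
    have hQτ := hQ (τ - t₀) (by linarith [hτ.1])
    have htri : dist (x τ) xbar ≤ dist (x τ) (y (τ - t₀)) + dist (y (τ - t₀)) xbar :=
      dist_triangle _ _ _
    rw [dist_eq_norm] at htri
    have : dist (x τ) xbar < δ / 2 + ε1 / 2 := by
      calc dist (x τ) xbar ≤ ‖x τ - y (τ - t₀)‖ + dist (y (τ - t₀)) xbar := htri
        _ < δ / 2 + ε1 / 2 := add_lt_add hdev hQτ
    linarith
  -- entry
  obtain ⟨tstar, htstar, hmemK⟩ := hrec (S + 1) (by linarith)
  have htstarS : S ≤ tstar := by linarith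
  have htstar0 : (0:ℝ) ≤ tstar := le_trans hS0 htstarS
  obtain ⟨T1, hT11, hT1le, hend1, _⟩ := stepE u x hx tstar htstar0 hmemK
    (fun s hs => le_trans (hS s (le_trans htstarS hs.1)) (min_le_right _ _))
  set t₁ : ℝ := tstar + T1 with ht₁def
  have hPt₁ : P t₁ := ⟨by simp only [ht₁def]; linarith,
    mem_closedBall.2 (by linarith)⟩
  -- chain the trap windows
  choose! Tf hTf1 hTfP hTfb using step
  set σ : ℕ → ℝ := fun k => Nat.rec t₁ (fun _ prev => prev + Tf prev) k with hσdef
  have hσ0 : σ 0 = t₁ := rfl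
  have hσsucc : ∀ k, σ (k + 1) = σ k + Tf (σ k) := fun k => rfl
  have hσP : ∀ k, P (σ k) := by
    intro k
    induction k with
    | zero => exact hPt₁
    | succ k ih => rw [hσsucc]; exact hTfP _ ih
  have hσge : ∀ k : ℕ, t₁ + k ≤ σ k := by
    intro k
    induction k with
    | zero => simp [hσ0]
    | succ k ih =>
      rw [hσsucc]
      have := hTf1 _ (hσP k)
      push_cast
      push_cast at ih
      linarith
  refine ⟨t₁, ?_⟩
  intro t ht
  have hex : ∃ k : ℕ, t < σ (k + 1) := by
    obtain ⟨k, hk⟩ := exists_nat_gt (t - t₁)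
    refine ⟨k, ?_⟩
    have := hσge (k + 1)
    push_cast at this
    linarith
  obtain ⟨k₀, hk2, hmin⟩ : ∃ k, t < σ (k + 1) ∧ ∀ m, m < k → ¬ t < σ (m + 1) :=
    ⟨Nat.find hex, Nat.find_spec hex, fun m hm => Nat.find_min hex hm⟩
  have hk1 : σ k₀ ≤ t := by
    cases k₀ with
    | zero => rw [hσ0]; exact ht
    | succ m =>
      by_contra hlt
      push_neg at hlt
      exact hmin m (Nat.lt_succ_self m) hlt
  have := hTfb (σ k₀) (hσP k₀) t ⟨hk1, by rw [← hσsucc]; exact hk2.le⟩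
  exact this
end

section
/- Let x̄ be an asymptotically stable equilibrium of the autonomous system ẋ = f(x, ū), with domain of attraction O. Then for each ε > 0 there is some δ > 0 such that, whenever |ξ| < δ and u is an input defined on [0,∞) with ‖u‖ < δ, the solution x(t) = φ(t, ξ, u) exists for all t ≥ 0 and satisfies |x(t)| < ε for all t ≥ 0. -/
open MeasureTheory Metric Set Filter Topology intervalIntegral
open scoped NNReal

set_option linter.unusedSectionVars false
set_option linter.unusedVariables false
set_option maxHeartbeats 1000000

section Radial
variable {E : Type*} [NormedAddCommGroup E] [NormedSpace ℝ E]

noncomputable def projB (r : ℝ) (v : E) : E := if ‖v‖ ≤ r then v else (r / ‖v‖) • v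

lemma projB_norm_le {r : ℝ} (hr : 0 < r) (v : E) : ‖projB r v‖ ≤ r := by
  unfold projB
  split_ifs with h
  · exact h
  · push_neg at h
    have hv : 0 < ‖v‖ := lt_trans hr h
    rw [norm_smul, Real.norm_eq_abs, abs_of_nonneg (by positivity),
      div_mul_cancel₀ _ (ne_of_gt hv)]

lemma projB_eq_self {r : ℝ} {v : E} (h : ‖v‖ ≤ r) : projB r v = v := if_pos h

lemma projB_lip {r : ℝ} (hr : 0 < r) (v w : E) :
    ‖projB r v - projB r w‖ ≤ 2 * ‖v - w‖ := by
  have key : ∀ x y : E, ‖x‖ ≤ r → r < ‖y‖ → ‖x - (r / ‖y‖) • y‖ ≤ 2 * ‖x - y‖ := by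
    intro x y hx hy
    have hy0 : 0 < ‖y‖ := lt_trans hr hy
    set s : ℝ := r / ‖y‖ with hs
    have hs0 : 0 ≤ s := by positivity
    have hs1 : s ≤ 1 := by rw [hs, div_le_one hy0]; exact hy.le
    have t1 : ‖x - s • y‖ ≤ ‖x - s • x‖ + ‖s • x - s • y‖ := by
      have := dist_triangle x (s • x) (s • y)
      simpa [dist_eq_norm] using this
    have e1 : ‖x - s • x‖ = (1 - s) * ‖x‖ := by
      rw [show x - s • x = (1 - s) • x by rw [sub_smul, one_smul], norm_smul,
        Real.norm_eq_abs, abs_of_nonneg (by linarith)]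
    have e2 : ‖s • x - s • y‖ = s * ‖x - y‖ := by
      rw [← smul_sub, norm_smul, Real.norm_eq_abs, abs_of_nonneg hs0]
    have e3 : (1 - s) * ‖x‖ ≤ (1 - s) * ‖y‖ := by
      apply mul_le_mul_of_nonneg_left (le_trans hx hy.le) (by linarith)
    have e4 : (1 - s) * ‖y‖ = ‖y‖ - r := by
      rw [hs, sub_mul, one_mul, div_mul_cancel₀ _ (ne_of_gt hy0)]
    have e5 : ‖y‖ - ‖x‖ ≤ ‖x - y‖ := by
      have := norm_sub_norm_le y x
      rwa [← neg_sub x y, norm_neg] at this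
    have e6 : s * ‖x - y‖ ≤ ‖x - y‖ := by
      nlinarith [norm_nonneg (x - y)]
    calc ‖x - s • y‖ ≤ (1 - s) * ‖x‖ + s * ‖x - y‖ := by rw [← e1, ← e2]; exact t1
    _ ≤ (‖y‖ - ‖x‖) + ‖x - y‖ := by
        have : (1 - s) * ‖x‖ ≤ ‖y‖ - ‖x‖ := by
          calc (1-s) * ‖x‖ ≤ (1-s) * ‖y‖ := e3
          _ = ‖y‖ - r := e4
          _ ≤ ‖y‖ - ‖x‖ := by linarith
        linarith
    _ ≤ 2 * ‖x - y‖ := by linarith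
  unfold projB
  split_ifs with h1 h2 h2
  · linarith [norm_nonneg (v - w)]
  · push_neg at h2; exact key v w h1 h2
  · push_neg at h1
    calc ‖(r/‖v‖) • v - w‖ = ‖w - (r/‖v‖) • v‖ := by rw [norm_sub_rev]
    _ ≤ 2 * ‖w - v‖ := key w v h2 h1
    _ = 2 * ‖v - w‖ := by rw [norm_sub_rev]
  · push_neg at h1 h2
    have hv0 : 0 < ‖v‖ := lt_trans hr h1
    have hw0 : 0 < ‖w‖ := lt_trans hr h2
    set sv : ℝ := r / ‖v‖
    set sw : ℝ := r / ‖w‖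
    have hsv0 : 0 ≤ sv := by positivity
    have hsv1 : sv ≤ 1 := by rw [div_le_one hv0]; exact h1.le
    have t1 : ‖sv • v - sw • w‖ ≤ ‖sv • v - sv • w‖ + ‖sv • w - sw • w‖ := by
      have := dist_triangle (sv • v) (sv • w) (sw • w)
      simpa [dist_eq_norm] using this
    have e2 : ‖sv • v - sv • w‖ = sv * ‖v - w‖ := by
      rw [← smul_sub, norm_smul, Real.norm_eq_abs, abs_of_nonneg hsv0]
    have e3 : ‖sv • w - sw • w‖ = |sv - sw| * ‖w‖ := by
      rw [← sub_smul, norm_smul, Real.norm_eq_abs]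
    have e4 : |sv - sw| * ‖w‖ ≤ sv * ‖v - w‖ := by
      have : |sv - sw| = r * |‖w‖ - ‖v‖| / (‖v‖ * ‖w‖) := by
        rw [div_sub_div _ _ (ne_of_gt hv0) (ne_of_gt hw0), abs_div,
          abs_of_pos (by positivity : (0:ℝ) < ‖v‖ * ‖w‖),
          show r * ‖w‖ - ‖v‖ * r = r * (‖w‖ - ‖v‖) by ring, abs_mul, abs_of_pos hr]
      rw [this]
      have habs : |‖w‖ - ‖v‖| ≤ ‖v - w‖ := by
        rw [← norm_neg (v - w), neg_sub]
        exact abs_norm_sub_norm_le w v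
      calc r * |‖w‖ - ‖v‖| / (‖v‖ * ‖w‖) * ‖w‖ = (r / ‖v‖) * |‖w‖ - ‖v‖| := by
            field_simp
      _ ≤ (r / ‖v‖) * ‖v - w‖ := by
            apply mul_le_mul_of_nonneg_left habs (by positivity)
    calc ‖sv • v - sw • w‖ ≤ sv * ‖v - w‖ + |sv - sw| * ‖w‖ := by rw [← e2, ← e3]; exact t1
    _ ≤ sv * ‖v - w‖ + sv * ‖v - w‖ := by linarith
    _ ≤ 2 * ‖v - w‖ := by nlinarith [norm_nonneg (v - w)]
end Radial

section Lemmas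
variable {E : Type*} [NormedAddCommGroup E] [NormedSpace ℝ E]
variable {U : Type*} [MetricSpace U]

/-- Local Lipschitz + bound on a compact set gives a uniform Lipschitz constant. -/
lemma unif_lip_s1 {f : E → U → E} {B : Set E} {K₀ : Set U} {M : ℝ}
    (hB : IsCompact B) (hBne : B.Nonempty)
    (hloc : ∀ x ∈ B, ∃ V ∈ 𝓝 x, ∃ L : ℝ,
      ∀ p ∈ V, ∀ q ∈ V, ∀ μ ∈ K₀, ‖f p μ - f q μ‖ ≤ L * ‖p - q‖)
    (hM : ∀ x ∈ B, ∀ μ ∈ K₀, ‖f x μ‖ ≤ M) :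
    ∃ L : ℝ, 0 ≤ L ∧ ∀ x ∈ B, ∀ z ∈ B, ∀ μ ∈ K₀, ‖f x μ - f z μ‖ ≤ L * ‖x - z‖ := by
  have key : ∀ x : E, x ∈ B → ∃ ρ > (0:ℝ), ∃ L : ℝ, 0 ≤ L ∧
      ∀ p ∈ ball x (2*ρ), ∀ q ∈ ball x (2*ρ), ∀ μ ∈ K₀, ‖f p μ - f q μ‖ ≤ L * ‖p - q‖ := by
    intro x hx
    obtain ⟨V, hV, L, hL⟩ := hloc x hx
    obtain ⟨ρ₀, hρ₀, hball⟩ := Metric.mem_nhds_iff.1 hV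
    refine ⟨ρ₀/4, by linarith, max L 0, le_max_right _ _, fun p hp q hq μ hμ => ?_⟩
    have hp' : p ∈ V := hball (mem_ball.2 (lt_of_lt_of_le (mem_ball.1 hp) (by linarith)))
    have hq' : q ∈ V := hball (mem_ball.2 (lt_of_lt_of_le (mem_ball.1 hq) (by linarith)))
    calc ‖f p μ - f q μ‖ ≤ L * ‖p - q‖ := hL p hp' q hq' μ hμ
    _ ≤ max L 0 * ‖p - q‖ := mul_le_mul_of_nonneg_right (le_max_left _ _) (norm_nonneg _)
  choose! ρ hρ L hL0 hL using key
  obtain ⟨t, htB, hcov⟩ := hB.elim_nhds_subcover (fun x => ball x (ρ x))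
    (fun x hx => ball_mem_nhds x (hρ x hx))
  obtain ⟨x₀, hx₀⟩ := hBne
  obtain ⟨c₀, hc₀, -⟩ := mem_iUnion₂.1 (hcov hx₀)
  have htne : t.Nonempty := ⟨c₀, hc₀⟩
  set d : ℝ := t.inf' htne ρ with hd
  have hd0 : 0 < d := by
    rw [hd, Finset.lt_inf'_iff]
    exact fun c hc => hρ c (htB c hc)
  set Lmax : ℝ := t.sup' htne L with hLm
  have hLm0 : 0 ≤ Lmax := le_trans (hL0 c₀ (htB c₀ hc₀)) (Finset.le_sup' L hc₀)
  refine ⟨max Lmax (max (2*M/d) 0), le_trans hLm0 (le_max_left _ _), fun x hx z hz μ hμ => ?_⟩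
  have hM0 : 0 ≤ M := le_trans (norm_nonneg _) (hM x hx μ hμ)
  by_cases hxz : ‖x - z‖ < d
  · obtain ⟨c, hc, hxc⟩ := mem_iUnion₂.1 (hcov hx)
    have hcB := htB c hc
    have hdc : d ≤ ρ c := Finset.inf'_le ρ hc
    have hx2 : x ∈ ball c (2 * ρ c) :=
      mem_ball.2 (lt_of_lt_of_le (mem_ball.1 hxc) (by linarith [hρ c hcB]))
    have hz2 : z ∈ ball c (2 * ρ c) := by
      rw [mem_ball]
      calc dist z c ≤ dist z x + dist x c := dist_triangle z x c
      _ < d + ρ c := by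
          rw [dist_eq_norm, ← norm_sub_rev]
          exact add_lt_add hxz (mem_ball.1 hxc)
      _ ≤ 2 * ρ c := by linarith
    calc ‖f x μ - f z μ‖ ≤ L c * ‖x - z‖ := hL c hcB x hx2 z hz2 μ hμ
    _ ≤ max Lmax (max (2*M/d) 0) * ‖x - z‖ := by
        apply mul_le_mul_of_nonneg_right _ (norm_nonneg _)
        exact le_trans (Finset.le_sup' L hc) (le_max_left _ _)
  · push_neg at hxz
    calc ‖f x μ - f z μ‖ ≤ ‖f x μ‖ + ‖f z μ‖ := norm_sub_le _ _
    _ ≤ 2 * M := by linarith [hM x hx μ hμ, hM z hz μ hμ]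
    _ = (2*M/d) * d := by field_simp
    _ ≤ (2*M/d) * ‖x - z‖ := mul_le_mul_of_nonneg_left hxz (by positivity)
    _ ≤ max Lmax (max (2*M/d) 0) * ‖x - z‖ := by
        apply mul_le_mul_of_nonneg_right _ (norm_nonneg _)
        exact le_trans (le_max_left _ _) (le_max_right _ _)

/-- Uniform smallness of `g (x, μ) - g (x, ubar)` for `x` in a compact set and `μ` near `ubar`. -/
lemma unif_small {g : E × U → E} {B : Set E} {ubar : U} (hg : Continuous g)
    (hB : IsCompact B) {η : ℝ} (hη : 0 < η) :
    ∃ b > (0:ℝ), ∀ x ∈ B, ∀ μ : U, dist μ ubar ≤ b →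
      ‖g (x, μ) - g (x, ubar)‖ ≤ η := by
  rcases B.eq_empty_or_nonempty with hBe | hBne
  · exact ⟨1, one_pos, fun x hx => by simp [hBe] at hx⟩
  have key : ∀ x : E, x ∈ B → ∃ ρ > (0:ℝ), ∀ p : E × U, dist p (x, ubar) < ρ →
      dist (g p) (g (x, ubar)) < η/2 := by
    intro x hx
    obtain ⟨ρ, hρ, h⟩ := Metric.continuousAt_iff.1 (hg.continuousAt (x := (x, ubar)))
      (η/2) (by linarith)
    exact ⟨ρ, hρ, fun p hp => h hp⟩
  choose! ρ hρ hcont using key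
  obtain ⟨t, htB, hcov⟩ := hB.elim_nhds_subcover (fun x => ball x (ρ x / 2))
    (fun x hx => ball_mem_nhds x (by linarith [hρ x hx]))
  obtain ⟨x₀, hx₀⟩ := hBne
  obtain ⟨c₀, hc₀, -⟩ := mem_iUnion₂.1 (hcov hx₀)
  have htne : t.Nonempty := ⟨c₀, hc₀⟩
  set b : ℝ := t.inf' htne (fun c => ρ c / 2) with hb
  have hb0 : 0 < b := by
    rw [hb, Finset.lt_inf'_iff]
    exact fun c hc => by linarith [hρ c (htB c hc)]
  refine ⟨b, hb0, fun x hx μ hμ => ?_⟩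
  obtain ⟨c, hc, hxc⟩ := mem_iUnion₂.1 (hcov hx)
  have hcB := htB c hc
  have hbc : b ≤ ρ c / 2 := Finset.inf'_le _ hc
  have hdx : dist x c < ρ c / 2 := mem_ball.1 hxc
  have h1 : dist ((x, μ) : E × U) (c, ubar) < ρ c := by
    rw [Prod.dist_eq]
    apply max_lt (by linarith) (by linarith)
  have h2 : dist ((x, ubar) : E × U) (c, ubar) < ρ c := by
    rw [Prod.dist_eq]
    apply max_lt (by linarith)
    simpa using hρ c hcB
  have d1 := hcont c hcB (x, μ) h1
  have d2 := hcont c hcB (x, ubar) h2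
  rw [← dist_eq_norm]
  calc dist (g (x, μ)) (g (x, ubar)) ≤
      dist (g (x, μ)) (g (c, ubar)) + dist (g (x, ubar)) (g (c, ubar)) :=
        dist_triangle_right _ _ _
  _ ≤ η := by linarith

/-- interval integrability from an a.e. bound. -/
lemma intervalIntegrable_of_ae_bound {h : ℝ → E} {a c M : ℝ} (hac : a ≤ c)
    (hm : AEStronglyMeasurable h (volume.restrict (Ioc a c)))
    (hb : ∀ᵐ s ∂volume.restrict (Ioc a c), ‖h s‖ ≤ M) :
    IntervalIntegrable h volume a c := by
  rw [intervalIntegrable_iff_integrableOn_Ioc_of_le hac]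
  exact Integrable.mono' (integrableOn_const measure_Ioc_lt_top.ne) hm hb

end Lemmas

section Gron
variable {E : Type*} [NormedAddCommGroup E] [NormedSpace ℝ E]

/-- Integral form of Grönwall's inequality. -/
lemma gronwall_int {v w : ℝ → E} {a c L η : ℝ} (hL : 0 ≤ L) (hη : 0 ≤ η)
    (hv : ContinuousOn v (Icc a c))
    (hw : ∀ t ∈ Icc a c, IntervalIntegrable w volume a t)
    (heq : ∀ t ∈ Icc a c, v t = v a + ∫ s in a..t, w s)
    (hbound : ∀ᵐ s ∂volume.restrict (Icc a c), ‖w s‖ ≤ L * ‖v s‖ + η) :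
    ∀ t ∈ Icc a c, ‖v t‖ ≤ gronwallBound ‖v a‖ L η (t - a) := by
  have hg : ContinuousOn (fun t => ‖v t‖) (Icc a c) := hv.norm
  apply le_gronwallBound_of_liminf_deriv_right_le hg
    (f' := fun t => L * ‖v t‖ + η) _ le_rfl (fun x hx => le_rfl)
  intro t ht r hr
  replace hr : L * ‖v t‖ + η < r := hr
  -- `ht : t ∈ Ico a c`
  -- choose h > 0 such that on [t, t+h] ∩ [a,c] we have L‖v s‖ + η ≤ (L‖v t‖+η+r)/2 < r
  set r' : ℝ := (L * ‖v t‖ + η + r) / 2 with hr'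
  have hr'lt : r' < r := by rw [hr']; linarith
  have hcont : ContinuousWithinAt (fun s => L * ‖v s‖ + η) (Icc a c) t :=
    ((hg.const_smul L).add continuousOn_const).continuousWithinAt (Ico_subset_Icc_self ht)
  have hev : ∀ᶠ s in 𝓝[Icc a c] t, L * ‖v s‖ + η < r' := by
    apply hcont.eventually_lt continuousWithinAt_const
    rw [hr']; linarith
  obtain ⟨h, hh0, hball⟩ := Metric.mem_nhdsWithin_iff.1 hev
  -- now show the difference quotient is `< r` for all z slightly to the right
  apply Filter.Eventually.frequently
  have hmem : Ioc t (min (t + h/2) c) ∈ 𝓝[>] t := by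
    apply Ioc_mem_nhdsGT_of_mem
    constructor
    · exact le_refl t
    · apply lt_min (by linarith) ht.2
  filter_upwards [hmem] with z hz
  have hzc : z ∈ Icc a c := ⟨le_trans ht.1 hz.1.le, le_trans hz.2 (min_le_right _ _)⟩
  have htc : t ∈ Icc a c := Ico_subset_Icc_self ht
  have hsub : Icc t z ⊆ Icc a c := Icc_subset_Icc htc.1 hzc.2
  have hsmall : ∀ s ∈ Icc t z, s ∈ ball t h := by
    intro s hs
    rw [mem_ball, Real.dist_eq, abs_of_nonneg (by linarith [hs.1])]
    have : z ≤ t + h/2 := le_trans hz.2 (min_le_left _ _)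
    linarith [hs.2]
  -- v z - v t = ∫_t^z w
  have hvw : v z - v t = ∫ s in t..z, w s := by
    rw [heq z hzc, heq t htc]
    have := integral_interval_sub_left (hw z hzc) (hw t htc)
    rw [← this]; abel
  have hwle : ∀ᵐ s ∂volume.restrict (uIoc t z), ‖w s‖ ≤ r' := by
    have h1 : uIoc t z ⊆ Icc a c := by
      rw [uIoc_of_le hz.1.le]; exact fun s hs => hsub ⟨hs.1.le, hs.2⟩
    have h2 := ae_restrict_of_ae_restrict_of_subset h1 hbound
    filter_upwards [h2, ae_restrict_mem measurableSet_uIoc] with s hs hsmem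
    apply le_trans hs
    apply le_of_lt
    apply hball
    rw [uIoc_of_le hz.1.le] at hsmem
    exact ⟨hsmall s ⟨hsmem.1.le, hsmem.2⟩, h1 (by rw [uIoc_of_le hz.1.le]; exact hsmem)⟩
  have hnorm : ‖v z - v t‖ ≤ r' * (z - t) := by
    rw [hvw]
    calc ‖∫ s in t..z, w s‖ ≤ |∫ s in t..z, (r' : ℝ)| :=
          norm_integral_le_abs_of_norm_le hwle (intervalIntegrable_const)
    _ = |r' * (z - t)| := by
          rw [intervalIntegral.integral_const, smul_eq_mul, mul_comm]
    _ = r' * (z - t) := by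
        rw [abs_mul, abs_of_nonneg (by linarith [hz.1] : (0:ℝ) ≤ z - t)]
        have hr'0 : 0 ≤ r' := by
          rw [hr']
          have : 0 ≤ L * ‖v t‖ + η := by positivity
          linarith
        rw [abs_of_nonneg hr'0]
  have hq : (z - t)⁻¹ * (‖v z‖ - ‖v t‖) ≤ r' := by
    have h1 : ‖v z‖ - ‖v t‖ ≤ ‖v z - v t‖ := norm_sub_norm_le _ _
    have hz0 : 0 < z - t := by linarith [hz.1]
    rw [inv_mul_le_iff₀ hz0]
    calc ‖v z‖ - ‖v t‖ ≤ r' * (z - t) := le_trans h1 hnorm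
    _ = (z - t) * r' := mul_comm _ _
  exact lt_of_le_of_lt hq hr'lt

end Gron

section Step
variable {E : Type*} [NormedAddCommGroup E] [NormedSpace ℝ E] [CompleteSpace E]
variable {U : Type*} [MetricSpace U]

lemma meas_comp {g : E × U → E} (hg : Continuous g) {u : ℝ → U} {a c : ℝ}
    (hum : AEStronglyMeasurable u (volume.restrict (Ioc a c)))
    {Y : ℝ → E} (hY : Continuous Y) :
    AEStronglyMeasurable (fun s => g (Y s, u s)) (volume.restrict (Ioc a c)) :=
  hg.comp_aestronglyMeasurable (hY.aestronglyMeasurable.prodMk hum)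

lemma int_comp {g : E × U → E} (hg : Continuous g) {u : ℝ → U} {K₀ : Set U}
    (hK : IsCompact K₀) {a c : ℝ} (hac : a ≤ c)
    (hum : AEStronglyMeasurable u (volume.restrict (Ioc a c)))
    (huK : ∀ᵐ s ∂volume.restrict (Ioc a c), u s ∈ K₀)
    {Y : ℝ → E} (hY : Continuous Y) :
    ∀ t ∈ Icc a c, IntervalIntegrable (fun s => g (Y s, u s)) volume a t := by
  have hcomp : IsCompact ((Y '' Icc a c) ×ˢ K₀) := ((isCompact_Icc.image hY)).prod hK
  obtain ⟨M, hM⟩ := hcomp.exists_bound_of_continuousOn hg.continuousOn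
  intro t ht
  apply intervalIntegrable_of_ae_bound ht.1
  · exact (meas_comp hg hum hY).mono_measure
      (Measure.restrict_mono (Ioc_subset_Ioc le_rfl ht.2) le_rfl)
  · have h1 : ∀ᵐ s ∂volume.restrict (Ioc a t), u s ∈ K₀ :=
      ae_mono (Measure.restrict_mono (Ioc_subset_Ioc le_rfl ht.2) le_rfl) huK
    filter_upwards [h1, ae_restrict_mem measurableSet_Ioc] with s hs hsm
    exact hM _ ⟨mem_image_of_mem Y (Ioc_subset_Icc_self (Ioc_subset_Ioc le_rfl ht.2 hsm)), hs⟩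

lemma step_exist {g : E × U → E} (hg : Continuous g) {u : ℝ → U} {K₀ : Set U}
    (hK : IsCompact K₀) {L a c : ℝ} (hL : 0 ≤ L) (hac : a ≤ c)
    (hsmall : L * (c - a) ≤ 1/2)
    (hum : AEStronglyMeasurable u (volume.restrict (Ioc a c)))
    (huK : ∀ᵐ s ∂volume.restrict (Ioc a c), u s ∈ K₀)
    (hlip : ∀ (x z : E), ∀ μ ∈ K₀, ‖g (x, μ) - g (z, μ)‖ ≤ L * ‖x - z‖)
    (ξ : E) :
    ∃ y : ℝ → E, Continuous y ∧ y a = ξ ∧ ∀ t ∈ Icc a c,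
      IntervalIntegrable (fun s => g (y s, u s)) volume a t ∧
      y t = ξ + ∫ s in a..t, g (y s, u s) := by
  haveI : Nonempty (Icc a c) := ⟨⟨a, le_refl a, hac⟩⟩
  set ext : C(Icc a c, E) → ℝ → E := fun y t => y (projIcc a c hac t) with hext
  have hextc : ∀ y : C(Icc a c, E), Continuous (ext y) :=
    fun y => y.continuous.comp continuous_projIcc
  -- the Picard map
  have hΦc : ∀ y : C(Icc a c, E),
      Continuous fun t : Icc a c => ξ + ∫ s in a..(t:ℝ), g (ext y s, u s) := by
    intro y
    have hint := int_comp hg hK hac hum huK (hextc y)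
    have h1 : ContinuousOn (fun τ : ℝ => ξ + ∫ s in a..τ, g (ext y s, u s)) (Icc a c) := by
      apply continuousOn_const.add
      have := continuousOn_primitive_interval'
        (hint c ⟨hac, le_rfl⟩) (left_mem_uIcc (a := a) (b := c))
      rwa [uIcc_of_le hac] at this
    rw [continuousOn_iff_continuous_restrict] at h1
    exact h1
  set Φ : C(Icc a c, E) → C(Icc a c, E) := fun y => ⟨_, hΦc y⟩ with hΦ
  have hlipΦ : ∀ y z : C(Icc a c, E), dist (Φ y) (Φ z) ≤ (1/2) * dist y z := by
    intro y z
    rw [ContinuousMap.dist_le (by positivity)]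
    intro t
    have hinty := int_comp hg hK hac hum huK (hextc y)
    have hintz := int_comp hg hK hac hum huK (hextc z)
    rw [hΦ, dist_eq_norm]
    have ht := t.2
    simp only [ContinuousMap.coe_mk]
    rw [add_sub_add_left_eq_sub, ← intervalIntegral.integral_sub (hinty _ ht) (hintz _ ht)]
    have hb : ∀ᵐ s ∂volume.restrict (uIoc a (t:ℝ)),
        ‖g (ext y s, u s) - g (ext z s, u s)‖ ≤ L * dist y z := by
      have h1 : uIoc a (t:ℝ) ⊆ Ioc a c := by
        rw [uIoc_of_le ht.1]
        exact Ioc_subset_Ioc le_rfl ht.2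
      filter_upwards [ae_restrict_of_ae_restrict_of_subset h1 huK] with s hs
      calc ‖g (ext y s, u s) - g (ext z s, u s)‖ ≤ L * ‖ext y s - ext z s‖ :=
            hlip _ _ _ hs
      _ ≤ L * dist y z := by
          apply mul_le_mul_of_nonneg_left _ hL
          rw [← dist_eq_norm]
          exact ContinuousMap.dist_apply_le_dist _
    calc ‖∫ s in a..(t:ℝ), (g (ext y s, u s) - g (ext z s, u s))‖
        ≤ |∫ _ in a..(t:ℝ), L * dist y z| :=
          norm_integral_le_abs_of_norm_le hb intervalIntegrable_const
    _ = L * dist y z * ((t:ℝ) - a) := by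
        rw [intervalIntegral.integral_const, smul_eq_mul, mul_comm, abs_of_nonneg
          (mul_nonneg (mul_nonneg hL dist_nonneg) (sub_nonneg.2 ht.1))]
    _ ≤ (1/2) * dist y z := by
        have h2 : L * ((t:ℝ) - a) ≤ 1/2 := by
          apply le_trans _ hsmall
          apply mul_le_mul_of_nonneg_left _ hL
          linarith [ht.2]
        nlinarith [dist_nonneg (x := y) (y := z), ht.1, mul_le_mul_of_nonneg_right h2 (dist_nonneg (x := y) (y := z))]
  have hcontr : ContractingWith (1/2 : ℝ≥0) Φ := by
    constructor
    · rw [← NNReal.coe_lt_coe]; norm_num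
    · apply LipschitzWith.of_dist_le_mul
      intro y z
      have hco : ((1/2 : ℝ≥0) : ℝ) = 1/2 := by norm_num
      rw [hco]
      exact hlipΦ y z
  set y₀ : C(Icc a c, E) := hcontr.fixedPoint Φ with hy₀
  have hfix : Φ y₀ = y₀ := hcontr.fixedPoint_isFixedPt
  refine ⟨ext y₀, hextc y₀, ?_, ?_⟩
  · have : y₀ ⟨a, le_refl a, hac⟩ = ξ := by
      conv_lhs => rw [← hfix]
      simp only [hΦ, ContinuousMap.coe_mk]
      rw [intervalIntegral.integral_same, add_zero]
    rw [hext]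
    simpa [projIcc_of_mem hac (show a ∈ Icc a c from ⟨le_refl a, hac⟩)] using this
  · intro t ht
    refine ⟨int_comp hg hK hac hum huK (hextc y₀) t ht, ?_⟩
    have : y₀ ⟨t, ht⟩ = ξ + ∫ s in a..t, g (ext y₀ s, u s) := by
      conv_lhs => rw [← hfix]
      simp only [hΦ, ContinuousMap.coe_mk]
    rw [hext]
    simpa [projIcc_of_mem hac ht] using this

end Step
section Glue
variable {E : Type*} [NormedAddCommGroup E] [NormedSpace ℝ E] [CompleteSpace E]
variable {U : Type*} [MetricSpace U]

lemma sol_glue {g : E × U → E} {u : ℝ → U} {a m c : ℝ} (ham : a ≤ m) (hmc : m ≤ c)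
    {y₁ y₂ : ℝ → E} (h₁c : Continuous y₁) (h₂c : Continuous y₂)
    (h₁ : ∀ t ∈ Icc a m, IntervalIntegrable (fun s => g (y₁ s, u s)) volume a t ∧
      y₁ t = y₁ a + ∫ s in a..t, g (y₁ s, u s))
    (h₂ : ∀ t ∈ Icc m c, IntervalIntegrable (fun s => g (y₂ s, u s)) volume m t ∧
      y₂ t = y₂ m + ∫ s in m..t, g (y₂ s, u s))
    (hmatch : y₂ m = y₁ m) :
    ∃ z : ℝ → E, Continuous z ∧ (∀ t ≤ m, z t = y₁ t) ∧ ∀ t ∈ Icc a c,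
      IntervalIntegrable (fun s => g (z s, u s)) volume a t ∧
      z t = z a + ∫ s in a..t, g (z s, u s) := by
  classical
  set z : ℝ → E := fun t => if t ≤ m then y₁ t else y₂ t with hz
  have hzc : Continuous z := by
    apply Continuous.if_le h₁c h₂c continuous_id continuous_const
    intro x hx
    simp only [id] at hx
    rw [hx, hmatch]
  have hz₁ : ∀ t ≤ m, z t = y₁ t := fun t ht => if_pos ht
  have hz₂ : ∀ t, m < t → z t = y₂ t := fun t ht => if_neg (not_le.2 ht)
  have hza : z a = y₁ a := hz₁ a ham
  have hzm : z m = y₁ m := hz₁ m le_rfl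
  -- integrand equalities
  have heq₁ : ∀ t ∈ Icc a m, EqOn (fun s => g (z s, u s)) (fun s => g (y₁ s, u s)) (Icc a t) := by
    intro t ht s hs
    simp only
    rw [hz₁ s (le_trans hs.2 ht.2)]
  have heq₂ : ∀ t ∈ Icc m c, EqOn (fun s => g (z s, u s)) (fun s => g (y₂ s, u s)) (Icc m t) := by
    intro t ht s hs
    simp only
    rcases lt_or_ge m s with h | h
    · rw [hz₂ s h]
    · have hsm : s = m := le_antisymm h hs.1
      rw [hsm, hzm, hmatch]
  -- integrability of the glued integrand
  have hint₁ : ∀ t ∈ Icc a m, IntervalIntegrable (fun s => g (z s, u s)) volume a t := by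
    intro t ht
    rw [intervalIntegrable_iff_integrableOn_Ioc_of_le ht.1]
    apply ((intervalIntegrable_iff_integrableOn_Ioc_of_le ht.1).1 (h₁ t ht).1).congr_fun _
      measurableSet_Ioc
    intro s hs
    exact ((heq₁ t ht (Ioc_subset_Icc_self hs))).symm
  have hint₂ : ∀ t ∈ Icc m c, IntervalIntegrable (fun s => g (z s, u s)) volume m t := by
    intro t ht
    rw [intervalIntegrable_iff_integrableOn_Ioc_of_le ht.1]
    apply ((intervalIntegrable_iff_integrableOn_Ioc_of_le ht.1).1 (h₂ t ht).1).congr_fun _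
      measurableSet_Ioc
    intro s hs
    simp only
    rw [hz₂ s hs.1]
  refine ⟨z, hzc, hz₁, fun t ht => ?_⟩
  rcases le_or_gt t m with htm | htm
  · have htm' : t ∈ Icc a m := ⟨ht.1, htm⟩
    refine ⟨hint₁ t htm', ?_⟩
    rw [hz₁ t htm, hza, (h₁ t htm').2]
    congr 1
    apply intervalIntegral.integral_congr
    intro s hs
    rw [uIcc_of_le ht.1] at hs
    exact (heq₁ t htm' ⟨hs.1, le_trans hs.2 (le_refl t)⟩).symm
  · have htm' : t ∈ Icc m c := ⟨htm.le, ht.2⟩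
    have hintm := hint₁ m ⟨ham, le_rfl⟩
    have hintt := hint₂ t htm'
    refine ⟨hintm.trans hintt, ?_⟩
    have e2 : z t = z m + ∫ s in m..t, g (z s, u s) := by
      rw [hz₂ t htm, (h₂ t htm').2, hzm, hmatch]
      congr 1
      apply intervalIntegral.integral_congr
      intro s hs
      rw [uIcc_of_le htm.le] at hs
      exact (heq₂ t htm' hs).symm
    have e1 : z m = z a + ∫ s in a..m, g (z s, u s) := by
      rw [hzm, hza, (h₁ m ⟨ham, le_rfl⟩).2]
      congr 1
      apply intervalIntegral.integral_congr
      intro s hs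
      rw [uIcc_of_le ham] at hs
      exact (heq₁ m ⟨ham, le_rfl⟩ hs).symm
    rw [e2, e1, add_assoc, intervalIntegral.integral_add_adjacent_intervals hintm hintt]
end Glue
section Chain
variable {E : Type*} [NormedAddCommGroup E] [NormedSpace ℝ E] [CompleteSpace E]
variable {U : Type*} [MetricSpace U]

/-- Existence of a solution on an arbitrary interval `[a, b]` for a field that is
globally Lipschitz in `x`, uniformly over a compact set of input values. -/
lemma chain_exist {g : E × U → E} (hg : Continuous g) {u : ℝ → U} {K₀ : Set U}
    (hK : IsCompact K₀) {L a b : ℝ} (hL : 0 ≤ L) (hab : a ≤ b)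
    (hum : AEStronglyMeasurable u (volume.restrict (Ioc a b)))
    (huK : ∀ᵐ s ∂volume.restrict (Ioc a b), u s ∈ K₀)
    (hlip : ∀ (x z : E), ∀ μ ∈ K₀, ‖g (x, μ) - g (z, μ)‖ ≤ L * ‖x - z‖)
    (ξ : E) :
    ∃ y : ℝ → E, Continuous y ∧ y a = ξ ∧ ∀ t ∈ Icc a b,
      IntervalIntegrable (fun s => g (y s, u s)) volume a t ∧
      y t = y a + ∫ s in a..t, g (y s, u s) := by
  set h : ℝ := (2*(L+1))⁻¹ with hh
  have hh0 : 0 < h := by rw [hh]; positivity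
  have hLh : L * h ≤ 1/2 := by
    rw [hh, mul_inv_le_iff₀ (by positivity)]
    nlinarith
  have claim : ∀ j : ℕ, ∃ y : ℝ → E, Continuous y ∧ y a = ξ ∧
      ∀ t ∈ Icc a (min b (a + j*h)),
        IntervalIntegrable (fun s => g (y s, u s)) volume a t ∧
        y t = y a + ∫ s in a..t, g (y s, u s) := by
    intro j
    induction j with
    | zero =>
      refine ⟨fun _ => ξ, continuous_const, rfl, fun t ht => ?_⟩
      rw [Nat.cast_zero, zero_mul, add_zero, min_eq_right hab] at ht
      have hta : t = a := le_antisymm ht.2 ht.1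
      subst hta
      exact ⟨IntervalIntegrable.refl, by simp⟩
    | succ j ih =>
      obtain ⟨y, hyc, hya, hy⟩ := ih
      push_cast
      set m : ℝ := min b (a + j*h) with hm
      set c' : ℝ := min b (a + (j+1)*h) with hc'
      have ham : a ≤ m := by
        apply le_min hab
        nlinarith [hh0.le, Nat.cast_nonneg (α := ℝ) j]
      have hmc' : m ≤ c' := by
        apply min_le_min le_rfl
        have : (j:ℝ) ≤ (j+1:ℕ) := by push_cast; linarith
        nlinarith [hh0.le]
      have hc'b : c' ≤ b := min_le_left _ _
      have hdiff : c' - m ≤ h := by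
        rcases le_or_gt b (a + j*h) with hb | hb
        · have h1 : m = b := min_eq_left hb
          have h2 : c' = b := min_eq_left (by push_cast; nlinarith [hh0.le])
          rw [h1, h2]; linarith
        · have h1 : m = a + j*h := min_eq_right hb.le
          have h2 : c' ≤ a + ((j:ℝ)+1)*h := min_le_right _ _
          rw [h1] at *
          linarith
      have hsmall : L * (c' - m) ≤ 1/2 :=
        le_trans (mul_le_mul_of_nonneg_left hdiff hL) hLh
      have hsub : Ioc m c' ⊆ Ioc a b := Ioc_subset_Ioc ham hc'b
      obtain ⟨y₂, hy₂c, hy₂m, hy₂⟩ := step_exist hg hK hL hmc' hsmall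
        (hum.mono_measure (Measure.restrict_mono hsub le_rfl))
        (ae_mono (Measure.restrict_mono hsub le_rfl) huK) hlip (y m)
      have h₂' : ∀ t ∈ Icc m c', IntervalIntegrable (fun s => g (y₂ s, u s)) volume m t ∧
          y₂ t = y₂ m + ∫ s in m..t, g (y₂ s, u s) := by
        intro t ht
        refine ⟨(hy₂ t ht).1, ?_⟩
        rw [hy₂m]; exact (hy₂ t ht).2
      have h₁' : ∀ t ∈ Icc a m, IntervalIntegrable (fun s => g (y s, u s)) volume a t ∧
          y t = y a + ∫ s in a..t, g (y s, u s) := by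
        intro t ht
        exact hy t ⟨ht.1, ht.2⟩
      obtain ⟨z, hzc, hzy, hzall⟩ := sol_glue ham hmc' hyc hy₂c h₁' h₂' hy₂m
      exact ⟨z, hzc, by rw [hzy a ham, hya], hzall⟩
  obtain ⟨y, hyc, hya, hy⟩ := claim ⌈(b - a)/h⌉₊
  refine ⟨y, hyc, hya, fun t ht => ?_⟩
  apply hy
  have hcov : b ≤ a + (⌈(b - a)/h⌉₊ : ℝ) * h := by
    have h1 : (b - a)/h ≤ (⌈(b - a)/h⌉₊ : ℝ) := Nat.le_ceil _
    rw [div_le_iff₀ hh0] at h1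
    linarith
  rw [min_eq_left hcov]
  exact ht

/-- Global existence on `[0, ∞)`. -/
lemma global_exist {g : E × U → E} (hg : Continuous g) {u : ℝ → U}
    (hum : AEStronglyMeasurable u (volume.restrict (Ici (0:ℝ))))
    (hKs : ∀ c : ℝ, 0 ≤ c → ∃ K₀ : Set U, IsCompact K₀ ∧
      ∀ᵐ s ∂volume.restrict (Ioc (0:ℝ) c), u s ∈ K₀)
    (hlips : ∀ K₀ : Set U, IsCompact K₀ → ∃ L : ℝ, 0 ≤ L ∧
      ∀ (x z : E), ∀ μ ∈ K₀, ‖g (x, μ) - g (z, μ)‖ ≤ L * ‖x - z‖)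
    (ξ : E) :
    ∃ y : ℝ → E, Continuous y ∧ y 0 = ξ ∧ ∀ t ≥ (0:ℝ),
      IntervalIntegrable (fun s => g (y s, u s)) volume 0 t ∧
      y t = ξ + ∫ s in (0:ℝ)..t, g (y s, u s) := by
  set Q : ℕ → (ℝ → E) → Prop := fun k y => Continuous y ∧ y 0 = ξ ∧
    ∀ t ∈ Icc (0:ℝ) (k:ℝ), IntervalIntegrable (fun s => g (y s, u s)) volume 0 t ∧
      y t = ξ + ∫ s in (0:ℝ)..t, g (y s, u s) with hQ
  have base : Q 0 (fun _ => ξ) := by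
    refine ⟨continuous_const, rfl, fun t ht => ?_⟩
    have hta : t = 0 := le_antisymm (by exact_mod_cast ht.2) ht.1
    subst hta
    exact ⟨IntervalIntegrable.refl, by simp⟩
  have ind : ∀ (k : ℕ) (y : ℝ → E), Q k y → ∃ y', Q (k+1) y' ∧ ∀ t ≤ (k:ℝ), y' t = y t := by
    intro k y hy
    obtain ⟨K₀, hK₀, huK₀⟩ := hKs (k+1) (by positivity)
    obtain ⟨L, hL0, hlip⟩ := hlips K₀ hK₀
    have hsub : Ioc (k:ℝ) (k+1) ⊆ Ioc 0 (k+1) :=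
      Ioc_subset_Ioc (Nat.cast_nonneg k) le_rfl
    have hsub' : Ioc (k:ℝ) (k+1) ⊆ Ici 0 :=
      fun s hs => le_trans (Nat.cast_nonneg k) hs.1.le
    obtain ⟨y₂, hy₂c, hy₂m, hy₂⟩ := chain_exist hg hK₀ hL0
      (by exact_mod_cast le_of_lt (lt_add_one (k:ℝ)))
      (hum.mono_measure (Measure.restrict_mono hsub' le_rfl))
      (ae_mono (Measure.restrict_mono hsub le_rfl) huK₀) hlip (y k)
    have h₁' : ∀ t ∈ Icc (0:ℝ) (k:ℝ),
        IntervalIntegrable (fun s => g (y s, u s)) volume 0 t ∧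
        y t = y 0 + ∫ s in (0:ℝ)..t, g (y s, u s) := by
      intro t ht
      refine ⟨(hy.2.2 t ht).1, ?_⟩
      rw [hy.2.1]; exact (hy.2.2 t ht).2
    have h₂' : ∀ t ∈ Icc (k:ℝ) ((k:ℝ)+1),
        IntervalIntegrable (fun s => g (y₂ s, u s)) volume k t ∧
        y₂ t = y₂ k + ∫ s in (k:ℝ)..t, g (y₂ s, u s) := fun t ht => (hy₂ t ht)
    obtain ⟨z, hzc, hzy, hzall⟩ := sol_glue (Nat.cast_nonneg k)
      (le_of_lt (lt_add_one (k:ℝ))) hy.1 hy₂c h₁' h₂' hy₂m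
    refine ⟨z, ⟨hzc, by rw [hzy 0 (Nat.cast_nonneg k), hy.2.1], fun t ht => ?_⟩, hzy⟩
    have : t ∈ Icc (0:ℝ) ((k:ℝ)+1) := by
      refine ⟨ht.1, ?_⟩
      have := ht.2
      push_cast at this ⊢
      linarith
    obtain ⟨hi, he⟩ := hzall t this
    exact ⟨hi, by rw [he, hzy 0 (Nat.cast_nonneg k), hy.2.1]⟩
  -- build the sequence of solutions
  choose F hF1 hF2 using ind
  have hGex : ∃ Y : ℕ → (ℝ → E), (∀ k, Q k (Y k)) ∧
      ∀ k : ℕ, ∀ t ≤ (k:ℝ), Y (k+1) t = Y k t := by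
    let G2 : ∀ k : ℕ, {y : ℝ → E // Q k y} := fun k =>
      Nat.rec ⟨fun _ => ξ, base⟩ (fun k p => ⟨F k p.1 p.2, hF1 k p.1 p.2⟩) k
    refine ⟨fun k => (G2 k).1, fun k => (G2 k).2, fun k t ht => ?_⟩
    exact hF2 k (G2 k).1 (G2 k).2 t ht
  obtain ⟨Y, hYQ, hYc⟩ := hGex
  -- consistency
  have hcons : ∀ k m : ℕ, k ≤ m → ∀ t ≤ (k:ℝ), Y m t = Y k t := by
    intro k m hkm
    induction m, hkm using Nat.le_induction with
    | base => intro t _; rfl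
    | succ m hkm ih =>
      intro t ht
      rw [hYc m t (le_trans ht (by exact_mod_cast hkm)), ih t ht]
  set y : ℝ → E := fun t => Y ⌈t⌉₊ t with hy
  have hagree : ∀ (k : ℕ) (t : ℝ), t ≤ (k:ℝ) → y t = Y k t := by
    intro k t ht
    rw [hy]
    simp only
    have h1 : (⌈t⌉₊ : ℕ) ≤ k := Nat.ceil_le.2 ht
    exact (hcons ⌈t⌉₊ k h1 t (Nat.le_ceil t)).symm
  have hyc : Continuous y := by
    rw [continuous_iff_continuousAt]
    intro t
    have hk : t < ((⌈t⌉₊ + 1 : ℕ) : ℝ) := by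
      push_cast
      linarith [Nat.le_ceil t]
    apply ContinuousAt.congr ((hYQ (⌈t⌉₊ + 1)).1.continuousAt)
    filter_upwards [Iio_mem_nhds hk] with s hs
    exact (hagree (⌈t⌉₊ + 1) s hs.le).symm
  refine ⟨y, hyc, ?_, ?_⟩
  · have h0 : y 0 = Y 0 0 := hagree 0 0 (by norm_num)
    rw [h0, (hYQ 0).2.1]
  · intro t ht
    set k : ℕ := ⌈t⌉₊ with hk
    have htk : t ∈ Icc (0:ℝ) (k:ℝ) := ⟨ht, Nat.le_ceil t⟩
    obtain ⟨hi, he⟩ := (hYQ k).2.2 t htk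
    have heqon : ∀ s ∈ Icc (0:ℝ) t, g (y s, u s) = g (Y k s, u s) := by
      intro s hs
      rw [hagree k s (le_trans hs.2 htk.2)]
    constructor
    · rw [intervalIntegrable_iff_integrableOn_Ioc_of_le ht]
      apply ((intervalIntegrable_iff_integrableOn_Ioc_of_le ht).1 hi).congr_fun _
        measurableSet_Ioc
      intro s hs
      exact (heqon s (Ioc_subset_Icc_self hs)).symm
    · rw [hagree k t htk.2, he]
      congr 1
      apply intervalIntegral.integral_congr
      intro s hs
      rw [uIcc_of_le ht] at hs
      exact (heqon s hs).symm
end Chain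

section SolLemmas
variable {n : ℕ} {U : Type*} [MetricSpace U]
  {X : Set (EuclideanSpace ℝ (Fin n))}
  {f : EuclideanSpace ℝ (Fin n) → U → EuclideanSpace ℝ (Fin n)}
  {ubar : U}

/-- time shift (semigroup property direction). -/
lemma sol_shift {z : ℝ → EuclideanSpace ℝ (Fin n)}
    (hz : IsSolOn X f (fun _ => ubar) z (Ici 0)) {a : ℝ} (ha : 0 ≤ a) :
    IsSolOn X f (fun _ => ubar) (fun t => z (t + a)) (Ici 0) := by
  obtain ⟨hc, hXm, hint, heq⟩ := hz
  have hmem : ∀ t : ℝ, t ∈ Ici (0:ℝ) → t + a ∈ Ici (0:ℝ) := fun t ht => by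
    simp only [mem_Ici] at *; linarith
  have hIa : ∀ t : ℝ, 0 ≤ t → IntervalIntegrable (fun s => f (z s) ubar) volume a (t + a) := by
    intro t ht
    apply (hint (t + a) (hmem t ht)).mono_set
    rw [uIcc_of_le (show a ≤ t + a by linarith), uIcc_of_le (show (0:ℝ) ≤ t + a by linarith)]
    exact Icc_subset_Icc ha le_rfl
  refine ⟨?_, fun t ht => hXm _ (hmem t ht), fun t ht => ?_, fun t ht => ?_⟩
  · exact ContinuousOn.comp hc
      ((continuous_id.add continuous_const).continuousOn) hmem
  · have := (hIa t ht).comp_add_right a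
    simpa using this
  · have ht' : (0:ℝ) ≤ t := ht
    have e1 : z (t + a) = z 0 + ∫ s in (0:ℝ)..(t+a), f (z s) ubar := heq _ (hmem t ht)
    have e2 : z a = z 0 + ∫ s in (0:ℝ)..a, f (z s) ubar := heq a (mem_Ici.2 ha)
    have e3 : (∫ s in (0:ℝ)..(t+a), f (z s) ubar) - ∫ s in (0:ℝ)..a, f (z s) ubar
        = ∫ s in a..(t+a), f (z s) ubar :=
      intervalIntegral.integral_interval_sub_left (hint (t+a) (hmem t ht))
        (hint a (mem_Ici.2 ha))
    have e4 : (∫ s in (0:ℝ)..t, f (z (s + a)) ubar) = ∫ s in a..(t+a), f (z s) ubar := by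
      rw [intervalIntegral.integral_comp_add_right (fun s => f (z s) ubar) a]
      norm_num
    have e5 : z (t + a) - z a = ∫ s in (0:ℝ)..t, f (z (s + a)) ubar := by
      rw [e1, e2, e4, ← e3]; abel
    have : z (t + a) = z (0 + a) + ∫ s in (0:ℝ)..t, f (z (s + a)) ubar := by
      rw [zero_add, ← e5]; abel
    simpa using this

/-- forward shift: the solution restarted at time `a`, as a function on `[a, ∞)`. -/
lemma sol_fwd {z : ℝ → EuclideanSpace ℝ (Fin n)}
    (hz : IsSolOn X f (fun _ => ubar) z (Ici 0)) {a : ℝ} (ha : 0 ≤ a) :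
    ∀ t, a ≤ t → IntervalIntegrable (fun s => f (z (s - a)) ubar) volume a t ∧
      z (t - a) = z 0 + ∫ s in a..t, f (z (s - a)) ubar := by
  obtain ⟨hc, hXm, hint, heq⟩ := hz
  intro t hat
  have h0 : (0:ℝ) ≤ t - a := by linarith
  have h1 : IntervalIntegrable (fun s => f (z s) ubar) volume 0 (t - a) := hint _ h0
  constructor
  · have := h1.comp_sub_right a
    rw [zero_add, sub_add_cancel] at this
    exact this
  · have e1 : z (t - a) = z 0 + ∫ s in (0:ℝ)..(t-a), f (z s) ubar := heq _ h0
    have e2 : (∫ s in a..t, f (z (s - a)) ubar) = ∫ s in (a-a)..(t-a), f (z s) ubar :=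
      intervalIntegral.integral_comp_sub_right (fun s => f (z s) ubar) a
    rw [e1, e2, sub_self]

/-- Uniqueness of solutions of the unperturbed system as long as one of them stays
well inside a ball on which `f (·, ubar)` is Lipschitz. -/
lemma uniq_loc {xbar : EuclideanSpace ℝ (Fin n)} {r L0 : ℝ} (hr : 0 < r) (hL0 : 0 ≤ L0)
    (hlipB : ∀ p ∈ closedBall xbar r, ∀ q ∈ closedBall xbar r,
      ‖f p ubar - f q ubar‖ ≤ L0 * ‖p - q‖)
    {y z : ℝ → EuclideanSpace ℝ (Fin n)}
    (hy : IsSolOn X f (fun _ => ubar) y (Ici 0))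
    (hz : IsSolOn X f (fun _ => ubar) z (Ici 0))
    (h0 : y 0 = z 0) (hzb : ∀ t ≥ (0:ℝ), dist (z t) xbar ≤ r/2) :
    ∀ t ≥ (0:ℝ), y t = z t := by
  by_contra hcon
  push_neg at hcon
  obtain ⟨t₁, ht₁0, ht₁⟩ := hcon
  set S : Set ℝ := {t | 0 ≤ t ∧ y t ≠ z t} with hS
  have hSne : S.Nonempty := ⟨t₁, ht₁0, ht₁⟩
  have hSbdd : BddBelow S := ⟨0, fun s hs => hs.1⟩
  set t₀ : ℝ := sInf S with ht₀
  have ht₀0 : 0 ≤ t₀ := le_csInf hSne (fun s hs => hs.1)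
  have hbefore : ∀ s, 0 ≤ s → s < t₀ → y s = z s := by
    intro s hs0 hst
    by_contra hne
    exact absurd (csInf_le hSbdd ⟨hs0, hne⟩) (not_le.2 hst)
  have ht₀eq : y t₀ = z t₀ := by
    rcases eq_or_lt_of_le ht₀0 with h | h
    · rw [← h]; exact h0
    · -- t₀ > 0 : use continuity from the left
      have hne : (𝓝[Ico 0 t₀] t₀).NeBot := by
        apply mem_closure_iff_nhdsWithin_neBot.1
        rw [closure_Ico (ne_of_lt h)]
        exact ⟨ht₀0, le_rfl⟩
      have hyc : Tendsto y (𝓝[Ico 0 t₀] t₀) (𝓝 (y t₀)) := by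
        apply (hy.1 t₀ ht₀0).mono_left
        apply nhdsWithin_mono
        exact fun s hs => hs.1
      have hzc : Tendsto z (𝓝[Ico 0 t₀] t₀) (𝓝 (z t₀)) := by
        apply (hz.1 t₀ ht₀0).mono_left
        apply nhdsWithin_mono
        exact fun s hs => hs.1
      have : Tendsto y (𝓝[Ico 0 t₀] t₀) (𝓝 (z t₀)) := by
        apply hzc.congr'
        filter_upwards [self_mem_nhdsWithin] with s hs
        exact (hbefore s hs.1 hs.2).symm
      exact tendsto_nhds_unique hyc this
  -- find a window on which both stay in the ball
  have hzmem : z t₀ ∈ closedBall xbar (r/2) := by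
    rw [mem_closedBall]
    exact hzb t₀ ht₀0
  have hwin : ∃ h > (0:ℝ), ∀ s ∈ Icc t₀ (t₀ + h),
      y s ∈ closedBall xbar r ∧ z s ∈ closedBall xbar r := by
    have hyc : ContinuousWithinAt y (Ici 0) t₀ := hy.1 t₀ ht₀0
    have hyev : ∀ᶠ s in 𝓝[Ici 0] t₀, dist (y s) (y t₀) < r/2 :=
      hyc (Metric.ball_mem_nhds _ (by linarith))
    obtain ⟨h₁, hh₁, hsub₁⟩ := Metric.mem_nhdsWithin_iff.1 hyev
    refine ⟨h₁/2, by linarith, fun s hs => ?_⟩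
    have hs0 : 0 ≤ s := le_trans ht₀0 hs.1
    have hsball : s ∈ ball t₀ h₁ ∩ Ici 0 := by
      constructor
      · rw [mem_ball, Real.dist_eq, abs_of_nonneg (by linarith [hs.1])]
        linarith [hs.2]
      · exact hs0
    have hy_close : dist (y s) (y t₀) < r/2 := hsub₁ hsball
    constructor
    · rw [mem_closedBall]
      calc dist (y s) xbar ≤ dist (y s) (y t₀) + dist (y t₀) xbar := dist_triangle _ _ _
      _ ≤ r/2 + r/2 := by
          apply add_le_add hy_close.le
          rw [ht₀eq]; exact hzb t₀ ht₀0
      _ = r := by ring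
    · rw [mem_closedBall]
      linarith [hzb s hs0]
  obtain ⟨h, hh0, hmem⟩ := hwin
  -- Gronwall on the window
  set v : ℝ → EuclideanSpace ℝ (Fin n) := fun s => y s - z s with hv
  set w : ℝ → EuclideanSpace ℝ (Fin n) := fun s => f (y s) ubar - f (z s) ubar with hw
  have hinty : ∀ t ∈ Icc t₀ (t₀ + h), IntervalIntegrable (fun s => f (y s) ubar) volume t₀ t := by
    intro t ht
    exact (hy.2.2.1 t (le_trans ht₀0 ht.1)).mono_set
      (by rw [uIcc_of_le ht.1, uIcc_of_le (le_trans ht₀0 ht.1)]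
          exact Icc_subset_Icc ht₀0 le_rfl)
  have hintz : ∀ t ∈ Icc t₀ (t₀ + h), IntervalIntegrable (fun s => f (z s) ubar) volume t₀ t := by
    intro t ht
    exact (hz.2.2.1 t (le_trans ht₀0 ht.1)).mono_set
      (by rw [uIcc_of_le ht.1, uIcc_of_le (le_trans ht₀0 ht.1)]
          exact Icc_subset_Icc ht₀0 le_rfl)
  have hveq : ∀ t ∈ Icc t₀ (t₀ + h), v t = v t₀ + ∫ s in t₀..t, w s := by
    intro t ht
    have ht0 : (0:ℝ) ≤ t := le_trans ht₀0 ht.1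
    have ey : y t - y t₀ = ∫ s in t₀..t, f (y s) ubar := by
      rw [hy.2.2.2 t ht0, hy.2.2.2 t₀ ht₀0]
      rw [← intervalIntegral.integral_interval_sub_left (hy.2.2.1 t ht0) (hy.2.2.1 t₀ ht₀0)]
      abel
    have ez : z t - z t₀ = ∫ s in t₀..t, f (z s) ubar := by
      rw [hz.2.2.2 t ht0, hz.2.2.2 t₀ ht₀0]
      rw [← intervalIntegral.integral_interval_sub_left (hz.2.2.1 t ht0) (hz.2.2.1 t₀ ht₀0)]
      abel
    have : v t - v t₀ = ∫ s in t₀..t, w s := by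
      rw [hv, hw]
      simp only
      rw [intervalIntegral.integral_sub (hinty t ht) (hintz t ht), ← ey, ← ez]
      abel
    rw [← this]; abel
  have hbound : ∀ᵐ s ∂volume.restrict (Icc t₀ (t₀ + h)), ‖w s‖ ≤ L0 * ‖v s‖ + 0 := by
    filter_upwards [ae_restrict_mem measurableSet_Icc] with s hs
    rw [add_zero]
    exact hlipB (y s) (hmem s hs).1 (z s) (hmem s hs).2
  have hgron := gronwall_int hL0 le_rfl
    (((hy.1.mono (fun s hs => le_trans ht₀0 hs.1)).sub
      (hz.1.mono (fun s hs => le_trans ht₀0 hs.1))) :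
        ContinuousOn v (Icc t₀ (t₀ + h)))
    (fun t ht => (hinty t ht).sub (hintz t ht)) hveq hbound
  have hvt₀ : v t₀ = 0 := by rw [hv]; simp only; rw [ht₀eq, sub_self]
  have hzero : ∀ t ∈ Icc t₀ (t₀ + h), y t = z t := by
    intro t ht
    have hthis := hgron t ht
    have h2 : ‖y t₀ - z t₀‖ = (0:ℝ) := by rw [ht₀eq, sub_self, norm_zero]
    simp only [Pi.sub_apply] at hthis
    rw [h2, gronwallBound_ε0, zero_mul] at hthis
    have hv0 : ‖y t - z t‖ = 0 := le_antisymm hthis (norm_nonneg _)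
    rw [norm_eq_zero] at hv0
    exact sub_eq_zero.1 hv0
  obtain ⟨s, hsS, hs⟩ := exists_lt_of_csInf_lt hSne (show t₀ < t₀ + h by linarith)
  rcases lt_or_ge s t₀ with hlt | hge
  · exact hsS.2 (hbefore s hsS.1 hlt)
  · exact hsS.2 (hzero s ⟨hge, hs.le⟩)

end SolLemmas

/-- **Theorem 1 (stability part).** For each `ε > 0` there is `δ > 0` such
that whenever `|ξ| < δ` and `‖u‖ < δ`, the solution `φ(t, ξ, u)` exists for all
`t ≥ 0` and satisfies `|φ(t, ξ, u)| < ε` for all `t ≥ 0`. -/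
theorem cics_stability {n : ℕ} {U : Type*} [MetricSpace U]
    (X : Set (EuclideanSpace ℝ (Fin n)))
    (f : EuclideanSpace ℝ (Fin n) → U → EuclideanSpace ℝ (Fin n))
    (xbar : EuclideanSpace ℝ (Fin n)) (ubar : U)
    (O : Set (EuclideanSpace ℝ (Fin n)))
    -- the state space is open, contains the equilibrium, and `f(x̄, ū) = 0`
    (hX : IsOpen X) (hxbar : xbar ∈ X) (heq : f xbar ubar = 0)
    -- `f` is continuous, and locally Lipschitz in `x` uniformly on compacts of `U`
    (hfc : ContinuousOn (fun p : EuclideanSpace ℝ (Fin n) × U => f p.1 p.2)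
      (X ×ˢ (univ : Set U)))
    (hflip : ∀ ξ ∈ X, ∀ K₀ : Set U, IsCompact K₀ → ∃ V ∈ 𝓝 ξ, ∃ L : ℝ,
      ∀ x ∈ V, ∀ z ∈ V, ∀ μ ∈ K₀, ‖f x μ - f z μ‖ ≤ L * ‖x - z‖)
    -- `x̄` is a stable equilibrium of `ẋ = f(x, ū)` ...
    (hstab : ∀ ε > 0, ∃ δ > 0, ∀ ξ ∈ X, dist ξ xbar ≤ δ →
      ∃ y, IsSolOn X f (fun _ => ubar) y (Ici 0) ∧ y 0 = ξ ∧
        ∀ t ≥ (0:ℝ), dist (y t) xbar < ε)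
    -- ... whose domain of attraction is `O`, a neighborhood of `x̄`
    (hO : O = {ξ | ∃ y, IsSolOn X f (fun _ => ubar) y (Ici 0) ∧ y 0 = ξ ∧
      Tendsto y atTop (𝓝 xbar)})
    (hOnhd : O ∈ 𝓝 xbar) :
    ∀ ε > (0:ℝ), ∃ δ > (0:ℝ), ∀ ξ ∈ X, dist ξ xbar < δ →
      ∀ u : ℝ → U, IsInput u → SupNormLt u ubar δ →
        ∃ y, IsSolOn X f u y (Ici 0) ∧ y 0 = ξ ∧
          ∀ t ≥ (0:ℝ), dist (y t) xbar < ε := by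
  intro ε hε
  classical
  -- a closed ball inside X ∩ O
  obtain ⟨r0, hr00, hr0sub⟩ : ∃ r0 > (0:ℝ), closedBall xbar r0 ⊆ X ∩ O := by
    have h1 : X ∩ O ∈ 𝓝 xbar := inter_mem (hX.mem_nhds hxbar) hOnhd
    exact (Metric.nhds_basis_closedBall.mem_iff).1 h1
  set r : ℝ := min r0 ε with hrdef
  have hr0 : 0 < r := lt_min hr00 hε
  have hrε : r ≤ ε := min_le_right _ _
  set B : Set (EuclideanSpace ℝ (Fin n)) := closedBall xbar r with hB
  have hBsub : B ⊆ X ∩ O := fun x hx =>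
    hr0sub (closedBall_subset_closedBall (min_le_left _ _) hx)
  have hBX : B ⊆ X := fun x hx => (hBsub hx).1
  have hBO : B ⊆ O := fun x hx => (hBsub hx).2
  have hBc : IsCompact B := isCompact_closedBall _ _
  have hxbarB : xbar ∈ B := mem_closedBall_self hr0.le
  -- the retraction onto B
  set proj : EuclideanSpace ℝ (Fin n) → EuclideanSpace ℝ (Fin n) := fun x => xbar + projB r (x - xbar) with hproj
  have hprojmem : ∀ x, proj x ∈ B := by
    intro x
    rw [hB, mem_closedBall, dist_eq_norm, hproj]
    simp only [add_sub_cancel_left]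
    exact projB_norm_le hr0 _
  have hprojeq : ∀ x ∈ B, proj x = x := by
    intro x hx
    rw [hproj]
    simp only
    rw [projB_eq_self (by rw [← dist_eq_norm]; exact mem_closedBall.1 hx)]
    abel
  have hprojlip : ∀ x z : EuclideanSpace ℝ (Fin n), ‖proj x - proj z‖ ≤ 2 * ‖x - z‖ := by
    intro x z
    rw [hproj]
    simp only [add_sub_add_left_eq_sub]
    calc ‖projB r (x - xbar) - projB r (z - xbar)‖ ≤ 2 * ‖(x - xbar) - (z - xbar)‖ :=
          projB_lip hr0 _ _
    _ = 2 * ‖x - z‖ := by rw [sub_sub_sub_cancel_right]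
  have hprojcont : Continuous proj := by
    apply LipschitzWith.continuous (K := 2)
    apply LipschitzWith.of_dist_le_mul
    intro x z
    rw [dist_eq_norm, dist_eq_norm]
    exact_mod_cast hprojlip x z
  -- the projected vector field
  set g : EuclideanSpace ℝ (Fin n)  × U → EuclideanSpace ℝ (Fin n) := fun p => f (proj p.1) p.2 with hg
  have hgc : Continuous g := by
    rw [continuous_iff_continuousAt]
    intro p
    have h1 : ContinuousAt (fun q : EuclideanSpace ℝ (Fin n) × U => f q.1 q.2) (proj p.1, p.2) :=
      hfc.continuousAt ((hX.prod isOpen_univ).mem_nhds ⟨hBX (hprojmem p.1), trivial⟩)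
    have h2 : ContinuousAt (fun q : EuclideanSpace ℝ (Fin n) × U => (proj q.1, q.2)) p :=
      ((hprojcont.comp continuous_fst).prodMk continuous_snd).continuousAt
    exact ContinuousAt.comp (f := fun q : EuclideanSpace ℝ (Fin n) × U => (proj q.1, q.2)) h1 h2
  have hgB : ∀ x ∈ B, ∀ μ : U, g (x, μ) = f x μ := by
    intro x hx μ
    rw [hg]
    simp only
    rw [hprojeq x hx]
  have hprojidem : ∀ (x : EuclideanSpace ℝ (Fin n)) (μ : U), g (proj x, μ) = g (x, μ) := by
    intro x μ
    rw [hgB (proj x) (hprojmem x) μ, hg]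
  -- uniform Lipschitz constants on B
  have hlipK : ∀ K₀ : Set U, IsCompact K₀ → ∃ L : ℝ, 0 ≤ L ∧
      ∀ x ∈ B, ∀ z ∈ B, ∀ μ ∈ K₀, ‖f x μ - f z μ‖ ≤ L * ‖x - z‖ := by
    intro K₀ hK₀
    obtain ⟨M, hM⟩ := (hBc.prod hK₀).exists_bound_of_continuousOn hgc.continuousOn
    apply unif_lip_s1 hBc ⟨xbar, hxbarB⟩ (fun x hx => hflip x (hBX hx) K₀ hK₀)
    intro x hx μ hμ
    rw [← hgB x hx μ]
    exact hM (x, μ) ⟨hx, hμ⟩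
  obtain ⟨L0, hL00, hlipB⟩ := hlipK {ubar} isCompact_singleton
  have hlipB' : ∀ p ∈ B, ∀ q ∈ B, ‖f p ubar - f q ubar‖ ≤ L0 * ‖p - q‖ :=
    fun p hp q hq => hlipB p hp q hq ubar rfl
  set Λ : ℝ := 2 * L0 + 1 with hΛ
  have hΛ0 : 0 < Λ := by rw [hΛ]; linarith
  have hlipg : ∀ x z : EuclideanSpace ℝ (Fin n), ‖g (x, ubar) - g (z, ubar)‖ ≤ Λ * ‖x - z‖ := by
    intro x z
    calc ‖g (x, ubar) - g (z, ubar)‖ ≤ L0 * ‖proj x - proj z‖ :=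
          hlipB' (proj x) (hprojmem x) (proj z) (hprojmem z)
    _ ≤ L0 * (2 * ‖x - z‖) := mul_le_mul_of_nonneg_left (hprojlip x z) hL00
    _ ≤ Λ * ‖x - z‖ := by rw [hΛ]; nlinarith [norm_nonneg (x - z)]
  -- quantitative stability
  have Stab : ∀ ρ : ℝ, 0 < ρ → ∃ δ : ℝ, 0 < δ ∧ δ ≤ ρ ∧ ∀ ξ' ∈ X, dist ξ' xbar ≤ δ →
      ∃ z, IsSolOn X f (fun _ => ubar) z (Ici 0) ∧ z 0 = ξ' ∧
        ∀ t ≥ (0:ℝ), dist (z t) xbar < ρ := by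
    intro ρ hρ
    obtain ⟨δ', hδ', hs⟩ := hstab ρ hρ
    exact ⟨min δ' ρ, lt_min hδ' hρ, min_le_right _ _,
      fun ξ' hξ'X hd => hs ξ' hξ'X (le_trans hd (min_le_left _ _))⟩
  obtain ⟨δ1, hδ10, hδ1le, hS1⟩ := Stab (r/2) (by linarith)
  obtain ⟨δ2, hδ20, hδ2le, hS2⟩ := Stab (δ1/2) (by linarith)
  obtain ⟨δ3, hδ30, hδ3le, hS3⟩ := Stab (δ2/2) (by linarith)
    -- uniform attraction over the ball of radius δ2
  have hδ2r : δ2 ≤ r := by linarith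
  have hUA : ∃ T : ℝ, 1 ≤ T ∧ ∀ z, IsSolOn X f (fun _ => ubar) z (Ici 0) →
      dist (z 0) xbar ≤ δ2 → (∀ t ≥ (0:ℝ), dist (z t) xbar ≤ δ1/2) →
      dist (z T) xbar ≤ δ2/2 := by
    have key : ∀ ζ ∈ closedBall xbar δ2, ∃ Tζ : ℝ, 1 ≤ Tζ ∧ ∃ ρζ > (0:ℝ),
        ∀ z, IsSolOn X f (fun _ => ubar) z (Ici 0) → dist (z 0) ζ ≤ ρζ →
        (∀ t ≥ (0:ℝ), dist (z t) xbar ≤ δ1/2) →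
        ∀ t ≥ Tζ, dist (z t) xbar ≤ δ2/2 := by
      intro ζ hζ
      have hζB : ζ ∈ B := closedBall_subset_closedBall hδ2r hζ
      have hζO : ζ ∈ O := hBO hζB
      have hζX : ζ ∈ X := hBX hζB
      rw [hO] at hζO
      obtain ⟨yζ, hyζsol, hyζ0, hyζtend⟩ := hζO
      obtain ⟨zζ, hzζsol, hzζ0, hzζb⟩ := hS2 ζ hζX (mem_closedBall.1 hζ)
      have huniq : ∀ t ≥ (0:ℝ), yζ t = zζ t := by
        apply uniq_loc hr0 hL00 hlipB' hyζsol hzζsol (by rw [hyζ0, hzζ0])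
        intro t ht
        have := hzζb t ht
        linarith
      have hzζtend : Tendsto zζ atTop (𝓝 xbar) := by
        apply hyζtend.congr'
        filter_upwards [eventually_ge_atTop (0:ℝ)] with t ht
        exact huniq t ht
      obtain ⟨T₀, hT₀⟩ := (Metric.tendsto_atTop.1 hzζtend) (δ3/2) (by linarith)
      set Tζ : ℝ := max T₀ 1 with hTζ
      have hTζ1 : 1 ≤ Tζ := le_max_right _ _
      have hTζ0 : 0 ≤ Tζ := by linarith
      set ρζ : ℝ := (δ3/2) * Real.exp (-(Λ * Tζ)) with hρζ
      have hρζ0 : 0 < ρζ := by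
        apply mul_pos (by linarith) (Real.exp_pos _)
      refine ⟨Tζ, hTζ1, ρζ, hρζ0, fun z hzsol hz0 hzb t ht => ?_⟩
      -- Gronwall between z and zζ on [0, Tζ]
      have hzmem : ∀ s ∈ Icc (0:ℝ) Tζ, z s ∈ B ∧ zζ s ∈ B := by
        intro s hs
        constructor
        · rw [hB, mem_closedBall]
          linarith [hzb s hs.1]
        · rw [hB, mem_closedBall]
          linarith [(hzζb s hs.1).le]
      have hintz : ∀ t' ∈ Icc (0:ℝ) Tζ,
          IntervalIntegrable (fun s => f (z s) ubar) volume 0 t' :=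
        fun t' ht' => hzsol.2.2.1 t' ht'.1
      have hintzζ : ∀ t' ∈ Icc (0:ℝ) Tζ,
          IntervalIntegrable (fun s => f (zζ s) ubar) volume 0 t' :=
        fun t' ht' => hzζsol.2.2.1 t' ht'.1
      have hveq : ∀ t' ∈ Icc (0:ℝ) Tζ, (fun s => z s - zζ s) t' =
          (fun s => z s - zζ s) 0 + ∫ s in (0:ℝ)..t', (f (z s) ubar - f (zζ s) ubar) := by
        intro t' ht'
        simp only
        have ez : z t' = z 0 + ∫ s in (0:ℝ)..t', f (z s) ubar := hzsol.2.2.2 t' ht'.1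
        have ezζ : zζ t' = zζ 0 + ∫ s in (0:ℝ)..t', f (zζ s) ubar := hzζsol.2.2.2 t' ht'.1
        rw [ez, ezζ, intervalIntegral.integral_sub (hintz t' ht') (hintzζ t' ht')]
        abel
      have hbnd : ∀ᵐ s ∂volume.restrict (Icc (0:ℝ) Tζ),
          ‖f (z s) ubar - f (zζ s) ubar‖ ≤ L0 * ‖z s - zζ s‖ + 0 := by
        filter_upwards [ae_restrict_mem measurableSet_Icc] with s hs
        rw [add_zero]
        exact hlipB' _ (hzmem s hs).1 _ (hzmem s hs).2
      have hgron := gronwall_int hL00 le_rfl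
        ((hzsol.1.mono (fun s hs => hs.1)).sub (hzζsol.1.mono (fun s hs => hs.1)))
        (fun t' ht' => (hintz t' ht').sub (hintzζ t' ht')) hveq hbnd
      have hTζmem : Tζ ∈ Icc (0:ℝ) Tζ := ⟨hTζ0, le_rfl⟩
      have htrack : ‖z Tζ - zζ Tζ‖ ≤ δ3/2 := by
        have h1 := hgron Tζ hTζmem
        rw [gronwallBound_ε0] at h1
        have h2 : ‖z 0 - zζ 0‖ ≤ ρζ := by
          rw [← dist_eq_norm, hzζ0]
          exact hz0
        have h3 : Real.exp (L0 * (Tζ - 0)) ≤ Real.exp (Λ * Tζ) := by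
          apply Real.exp_le_exp.2
          rw [hΛ]
          nlinarith
        calc ‖z Tζ - zζ Tζ‖ ≤ ‖z 0 - zζ 0‖ * Real.exp (L0 * (Tζ - 0)) := h1
        _ ≤ ρζ * Real.exp (Λ * Tζ) := by
            apply mul_le_mul h2 h3 (Real.exp_pos _).le hρζ0.le
        _ = δ3/2 := by
            rw [hρζ, mul_assoc, ← Real.exp_add]
            simp
      have hzTζ : dist (z Tζ) xbar ≤ δ3 := by
        calc dist (z Tζ) xbar ≤ dist (z Tζ) (zζ Tζ) + dist (zζ Tζ) xbar := dist_triangle _ _ _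
        _ ≤ δ3/2 + δ3/2 := by
            apply add_le_add
            · rw [dist_eq_norm]; exact htrack
            · exact (hT₀ Tζ (le_max_left _ _)).le
        _ = δ3 := by ring
      -- after time Tζ, stay within δ2/2
      have hwsol := sol_shift hzsol hTζ0
      have hw0X : z Tζ ∈ X := hzsol.2.1 Tζ hTζ0
      obtain ⟨z', hz'sol, hz'0, hz'b⟩ := hS3 (z Tζ) hw0X (by simpa using hzTζ)
      have huniq2 : ∀ s ≥ (0:ℝ), z (s + Tζ) = z' s := by
        apply uniq_loc hr0 hL00 hlipB' hwsol hz'sol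
        · simp only [zero_add]
          rw [hz'0]
        · intro s hs
          have := hz'b s hs
          linarith
      have : z t = z' (t - Tζ) := by
        have h1 := huniq2 (t - Tζ) (by linarith)
        rw [sub_add_cancel] at h1
        exact h1
      rw [this]
      have := hz'b (t - Tζ) (by linarith)
      linarith
    -- compactness
    choose! Tf hTf1 ρf hρf0 hKey using key
    have hK2c : IsCompact (closedBall xbar δ2) := isCompact_closedBall _ _
    obtain ⟨t, htmem, hcov⟩ := hK2c.elim_nhds_subcover (fun ζ => ball ζ (ρf ζ))
      (fun ζ hζ => ball_mem_nhds ζ (hρf0 ζ hζ))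
    have hxbarK2 : xbar ∈ closedBall xbar δ2 := mem_closedBall_self hδ20.le
    obtain ⟨ζ₀, hζ₀, -⟩ := mem_iUnion₂.1 (hcov hxbarK2)
    have htne : t.Nonempty := ⟨ζ₀, hζ₀⟩
    set T : ℝ := t.sup' htne Tf with hT
    have hT1 : 1 ≤ T := le_trans (hTf1 ζ₀ (htmem ζ₀ hζ₀)) (Finset.le_sup' Tf hζ₀)
    refine ⟨T, hT1, fun z hzsol hz0 hzb => ?_⟩
    have hz0K2 : z 0 ∈ closedBall xbar δ2 := mem_closedBall.2 hz0
    obtain ⟨ζ, hζt, hzζ⟩ := mem_iUnion₂.1 (hcov hz0K2)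
    exact hKey ζ (htmem ζ hζt) z hzsol (mem_ball.1 hzζ).le hzb T
      (Finset.le_sup' Tf hζt)
  obtain ⟨T, hT1, hUAp⟩ := hUA
  have hT0 : 0 < T := by linarith
    -- drift budget and input-smallness constants
  set m : ℝ := min (δ2/2) (r/4) with hm
  have hm0 : 0 < m := lt_min (by linarith) (by linarith)
  have hmδ2 : m ≤ δ2/2 := min_le_left _ _
  have hmr : m ≤ r/4 := min_le_right _ _
  set η : ℝ := m * Λ / Real.exp (Λ * T) with hηdef
  have hη0 : 0 < η := by
    apply div_pos (mul_pos hm0 hΛ0) (Real.exp_pos _)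
  have hgb : ∀ s : ℝ, 0 ≤ s → s ≤ T → gronwallBound 0 Λ η s ≤ m := by
    intro s h0s hsT
    rw [gronwallBound_of_K_ne_0 (ne_of_gt hΛ0)]
    simp only [zero_mul, zero_add]
    have h1 : Real.exp (Λ * s) - 1 ≤ Real.exp (Λ * T) := by
      have := Real.exp_le_exp.2 (mul_le_mul_of_nonneg_left hsT hΛ0.le)
      linarith [Real.exp_pos (Λ * T)]
    have h2 : η / Λ = m / Real.exp (Λ * T) := by
      rw [hηdef]
      field_simp
    rw [h2]
    calc m / Real.exp (Λ * T) * (Real.exp (Λ * s) - 1)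
        ≤ m / Real.exp (Λ * T) * Real.exp (Λ * T) := by
          apply mul_le_mul_of_nonneg_left h1 (by positivity)
    _ = m := by field_simp
  obtain ⟨b, hb0, hbsmall⟩ := unif_small (ubar := ubar) hgc hBc hη0
  -- the final δ
  refine ⟨min δ2 b, lt_min hδ20 hb0, fun ξ hξX hξd u hIu hsup => ?_⟩
  obtain ⟨b', hb', hb'ae⟩ := hsup
  have hb''b : max b' 0 ≤ b := by
    apply max_le _ hb0.le
    calc b' ≤ min δ2 b := hb'.le
    _ ≤ b := min_le_right _ _
  have hae : ∀ᵐ t ∂(volume.restrict (Ici (0:ℝ))), dist (u t) ubar ≤ max b' 0 :=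
    hb'ae.mono fun t ht => le_trans ht (le_max_left _ _)
  -- global existence for the projected system
  obtain ⟨y, hyc, hy0, hyall⟩ := global_exist hgc hIu.1
    (fun c hc => by
      obtain ⟨K₀, hK₀c, hK₀ae⟩ := hIu.2 (Icc 0 c) isCompact_Icc
        (fun s hs => hs.1)
      exact ⟨K₀, hK₀c, ae_mono (Measure.restrict_mono Ioc_subset_Icc_self le_rfl) hK₀ae⟩)
    (fun K₀ hK₀ => by
      obtain ⟨LB, hLB0, hLB⟩ := hlipK K₀ hK₀
      refine ⟨2 * LB, by linarith, fun x z μ hμ => ?_⟩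
      calc ‖g (x, μ) - g (z, μ)‖ ≤ LB * ‖proj x - proj z‖ :=
            hLB (proj x) (hprojmem x) (proj z) (hprojmem z) μ hμ
      _ ≤ LB * (2 * ‖x - z‖) := mul_le_mul_of_nonneg_left (hprojlip x z) hLB0
      _ = 2 * LB * ‖x - z‖ := by ring)
    ξ
  -- one tracking step
  have step : ∀ a : ℝ, 0 ≤ a → dist (y a) xbar ≤ δ2 →
      (∀ t ∈ Icc a (a+T), dist (y t) xbar ≤ δ1/2 + m) ∧
      dist (y (a+T)) xbar ≤ δ2 := by
    intro a ha hA
    have hyaX : y a ∈ X := hBX (mem_closedBall.2 (by linarith))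
    obtain ⟨z, hzsol, hz0, hzb⟩ := hS2 (y a) hyaX hA
    set zt : ℝ → EuclideanSpace ℝ (Fin n) := fun t => z (t - a) with hzt
    have hfwd := sol_fwd hzsol ha
    have hztb : ∀ t, a ≤ t → dist (zt t) xbar < δ1/2 := fun t ht => hzb (t-a) (by linarith)
    have hztB : ∀ t, a ≤ t → zt t ∈ B := by
      intro t ht
      rw [hB, mem_closedBall]
      linarith [hztb t ht]
    have hzta : zt a = y a := by
      rw [hzt]
      simp only [sub_self]
      exact hz0
    -- integrability of the perturbed integrand from `a`
    have hyint : ∀ t ∈ Icc a (a+T), IntervalIntegrable (fun s => g (y s, u s)) volume a t := by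
      intro t ht
      apply ((hyall t (by linarith [ht.1])).1).mono_set
      rw [uIcc_of_le ht.1, uIcc_of_le (by linarith [ht.1] : (0:ℝ) ≤ t)]
      exact Icc_subset_Icc ha le_rfl
    have hztint : ∀ t ∈ Icc a (a+T),
        IntervalIntegrable (fun s => f (zt s) ubar) volume a t :=
      fun t ht => (hfwd t ht.1).1
    -- the integral equation for v := y - zt based at a
    have hveq : ∀ t ∈ Icc a (a+T), (fun s => y s - zt s) t =
        (fun s => y s - zt s) a + ∫ s in a..t, (g (y s, u s) - f (zt s) ubar) := by
      intro t ht
      simp only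
      have ht0 : (0:ℝ) ≤ t := by linarith [ht.1]
      have ey : y t - y a = ∫ s in a..t, g (y s, u s) := by
        have e1 : y t = ξ + ∫ s in (0:ℝ)..t, g (y s, u s) := (hyall t ht0).2
        have e2 : y a = ξ + ∫ s in (0:ℝ)..a, g (y s, u s) := (hyall a ha).2
        rw [e1, e2, ← intervalIntegral.integral_interval_sub_left
          (hyall t ht0).1 (hyall a ha).1]
        abel
      have ez : zt t - zt a = ∫ s in a..t, f (zt s) ubar := by
        have e1 : zt t = z 0 + ∫ s in a..t, f (z (s - a)) ubar := (hfwd t ht.1).2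
        have e2 : zt a = z 0 := by rw [hzt]; simp
        rw [e1, e2]
        abel
      rw [intervalIntegral.integral_sub (hyint t ht) (hztint t ht), ← ey, ← ez]
      abel
    have hbnd : ∀ᵐ s ∂volume.restrict (Icc a (a+T)),
        ‖g (y s, u s) - f (zt s) ubar‖ ≤ Λ * ‖y s - zt s‖ + η := by
      have hsub : Icc a (a+T) ⊆ Ici (0:ℝ) := fun s hs => le_trans ha hs.1
      filter_upwards [ae_restrict_of_ae_restrict_of_subset hsub hae,
        ae_restrict_mem measurableSet_Icc] with s hsu hsmem
      have h1 : ‖g (y s, u s) - g (y s, ubar)‖ ≤ η := by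
        rw [← hprojidem (y s) (u s), ← hprojidem (y s) ubar]
        exact hbsmall (proj (y s)) (hprojmem (y s)) (u s) (le_trans hsu hb''b)
      have h2 : ‖g (y s, ubar) - f (zt s) ubar‖ ≤ Λ * ‖y s - zt s‖ := by
        rw [← hgB (zt s) (hztB s hsmem.1) ubar]
        exact hlipg (y s) (zt s)
      calc ‖g (y s, u s) - f (zt s) ubar‖
          ≤ ‖g (y s, u s) - g (y s, ubar)‖ + ‖g (y s, ubar) - f (zt s) ubar‖ := by
            have := dist_triangle (g (y s, u s)) (g (y s, ubar)) (f (zt s) ubar)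
            simpa [dist_eq_norm] using this
      _ ≤ η + Λ * ‖y s - zt s‖ := add_le_add h1 h2
      _ = Λ * ‖y s - zt s‖ + η := by ring
    have hztcont : ContinuousOn zt (Icc a (a+T)) := by
      apply hzsol.1.comp ((continuous_id.sub continuous_const).continuousOn)
      intro s hs
      simp only [Pi.sub_apply, id_eq, mem_Ici]
      linarith [hs.1]
    have hgron := gronwall_int hΛ0.le hη0.le
      ((hyc.continuousOn).sub hztcont)
      (fun t ht => (hyint t ht).sub (hztint t ht)) hveq hbnd
    have hva : ‖y a - zt a‖ = 0 := by rw [hzta, sub_self, norm_zero]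
    have htrack : ∀ t ∈ Icc a (a+T), ‖y t - zt t‖ ≤ m := by
      intro t ht
      have h1 := hgron t ht
      simp only [Pi.sub_apply] at h1
      rw [hva] at h1
      exact le_trans h1 (hgb (t - a) (by linarith [ht.1]) (by linarith [ht.2]))
    constructor
    · intro t ht
      calc dist (y t) xbar ≤ dist (y t) (zt t) + dist (zt t) xbar := dist_triangle _ _ _
      _ ≤ m + δ1/2 := by
          apply add_le_add
          · rw [dist_eq_norm]; exact htrack t ht
          · exact (hztb t ht.1).le
      _ = δ1/2 + m := by ring
    · have hend : dist (zt (a+T)) xbar ≤ δ2/2 := by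
        have : zt (a+T) = z T := by rw [hzt]; simp
        rw [this]
        apply hUAp z hzsol _ (fun s hs => (hzb s hs).le)
        rw [hz0]
        exact hA
      calc dist (y (a+T)) xbar ≤ dist (y (a+T)) (zt (a+T)) + dist (zt (a+T)) xbar :=
            dist_triangle _ _ _
      _ ≤ m + δ2/2 := by
          apply add_le_add _ hend
          rw [dist_eq_norm]
          exact htrack (a+T) ⟨by linarith, le_rfl⟩
      _ ≤ δ2 := by linarith
  -- iterate the step
  have hmain : ∀ k : ℕ, dist (y ((k:ℝ)*T)) xbar ≤ δ2 ∧
      ∀ t ∈ Icc ((k:ℝ)*T) ((k:ℝ)*T + T), dist (y t) xbar ≤ δ1/2 + m := by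
    intro k
    induction k with
    | zero =>
      have h0 : dist (y 0) xbar ≤ δ2 := by
        rw [hy0]
        calc dist ξ xbar ≤ min δ2 b := hξd.le
        _ ≤ δ2 := min_le_left _ _
      constructor
      · simpa using h0
      · have := (step 0 le_rfl (by simpa using h0)).1
        simpa using this
    | succ k ih =>
      have hk0 : (0:ℝ) ≤ (k:ℝ)*T := by positivity
      have hstep := step ((k:ℝ)*T) hk0 ih.1
      have hcast : ((k+1:ℕ):ℝ)*T = (k:ℝ)*T + T := by push_cast; ring
      constructor
      · rw [hcast]; exact hstep.2
      · intro t ht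
        rw [hcast] at ht
        have hk0' : (0:ℝ) ≤ (k:ℝ)*T + T := by linarith
        exact (step ((k:ℝ)*T + T) hk0' hstep.2).1 t ht
  -- the solution stays in the small ball forever
  have hbnd : ∀ t ≥ (0:ℝ), dist (y t) xbar ≤ δ1/2 + m := by
    intro t ht
    set k : ℕ := ⌊t/T⌋₊ with hk
    have h1 : (k:ℝ)*T ≤ t := by
      rw [hk]
      have := Nat.floor_le (div_nonneg ht hT0.le)
      calc ((⌊t/T⌋₊:ℝ))*T ≤ (t/T)*T := mul_le_mul_of_nonneg_right this hT0.le
      _ = t := by field_simp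
    have h2 : t ≤ (k:ℝ)*T + T := by
      have := Nat.lt_floor_add_one (t/T)
      have h3 : t/T < (k:ℝ) + 1 := by rw [hk]; exact_mod_cast this
      have h4 : t < ((k:ℝ)+1)*T := by
        rw [← div_lt_iff₀ hT0] at *
        linarith
      linarith
    exact (hmain k).2 t ⟨h1, h2⟩
  have hfin : ∀ t ≥ (0:ℝ), dist (y t) xbar < ε := by
    intro t ht
    have h1 := hbnd t ht
    have h2 : δ1/2 + m ≤ r/2 := by linarith
    calc dist (y t) xbar ≤ r/2 := le_trans h1 h2
    _ < r := by linarith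
    _ ≤ ε := hrε
  have hyB : ∀ t ≥ (0:ℝ), y t ∈ B := by
    intro t ht
    rw [hB, mem_closedBall]
    have := hbnd t ht
    linarith
  -- y solves the original system
  refine ⟨y, ⟨hyc.continuousOn, fun t ht => hBX (hyB t ht), fun t ht => ?_, fun t ht => ?_⟩,
    hy0, hfin⟩
  · -- integrability
    have ht0 : (0:ℝ) ≤ t := ht
    rw [intervalIntegrable_iff_integrableOn_Ioc_of_le ht0]
    apply ((intervalIntegrable_iff_integrableOn_Ioc_of_le ht0).1 (hyall t ht0).1).congr_fun _
      measurableSet_Ioc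
    intro s hs
    simp only
    exact hgB (y s) (hyB s hs.1.le) (u s)
  · have ht0 : (0:ℝ) ≤ t := ht
    rw [hy0] at *
    rw [(hyall t ht0).2]
    congr 1
    apply intervalIntegral.integral_congr
    intro s hs
    rw [uIcc_of_le ht0] at hs
    exact hgB (y s) (hyB s hs.1) (u s)
end

section
/- Let x̄ be an asymptotically stable equilibrium of the autonomous system ẋ = f(x, ū), with domain of attraction O. Let x(·) be a solution of ẋ(t) = f(x(t), u(t)) defined on all of [0,∞), corresponding to an input u with u(t) → ū as t → ∞, such that the closure of the image {x(t) : t ≥ 0} is a compact subset of O. Then x(t) → x̄ as t → ∞. -/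
open MeasureTheory Metric Set Filter Topology

section Aux

variable {n : ℕ} {U : Type*} [MetricSpace U]
    {X : Set (EuclideanSpace ℝ (Fin n))}
    {f : EuclideanSpace ℝ (Fin n) → U → EuclideanSpace ℝ (Fin n)} {ubar : U}

/-- A solution for the constant input extends to a globally `C¹` function
satisfying the ODE on `[0,∞)`. -/
lemma sol_extend (hX : IsOpen X)
    (hfc : ContinuousOn (fun p : EuclideanSpace ℝ (Fin n) × U => f p.1 p.2)
      (X ×ˢ (univ : Set U)))
    {y : ℝ → EuclideanSpace ℝ (Fin n)}
    (h : IsSolOn X f (fun _ => ubar) y (Ici 0)) :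
    ∃ Y : ℝ → EuclideanSpace ℝ (Fin n), Continuous Y ∧ (∀ t ≥ (0:ℝ), Y t = y t) ∧
      ∀ t ≥ (0:ℝ), HasDerivAt Y (f (Y t) ubar) t := by
  obtain ⟨hyc, hyX, hyi, hye⟩ := h
  have hmax : ∀ s : ℝ, max s 0 ∈ Ici (0:ℝ) := fun s => mem_Ici.2 (le_max_right _ _)
  have hymax : Continuous (fun s => y (max s 0)) :=
    hyc.comp_continuous (continuous_id.max continuous_const) hmax
  have hopen : IsOpen (X ×ˢ (univ : Set U)) := hX.prod isOpen_univ
  have hg : Continuous (fun s => f (y (max s 0)) ubar) := by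
    rw [continuous_iff_continuousAt]
    intro s
    have h1 : ContinuousAt (fun p : EuclideanSpace ℝ (Fin n) × U => f p.1 p.2)
        (y (max s 0), ubar) :=
      hfc.continuousAt (hopen.mem_nhds ⟨hyX _ (hmax s), mem_univ _⟩)
    exact ContinuousAt.comp (x := s) h1 ((hymax.prodMk continuous_const).continuousAt)
  set Y : ℝ → EuclideanSpace ℝ (Fin n) :=
    fun t => y 0 + ∫ s in (0:ℝ)..t, f (y (max s 0)) ubar with hYdef
  have hY' : ∀ t : ℝ, HasDerivAt Y (f (y (max t 0)) ubar) t := fun t =>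
    ((hg.integral_hasStrictDerivAt 0 t).hasDerivAt).const_add (y 0)
  have hYeq : ∀ t ≥ (0:ℝ), Y t = y t := by
    intro t ht
    have hcongr : ∫ s in (0:ℝ)..t, f (y (max s 0)) ubar
        = ∫ s in (0:ℝ)..t, f (y s) ubar := by
      apply intervalIntegral.integral_congr
      intro s hs
      rw [uIcc_of_le ht] at hs
      have hms : max s 0 = s := max_eq_left hs.1
      simp only [hms]
    rw [hYdef]
    simp only
    rw [hcongr, ← hye t ht]
  refine ⟨Y, ?_, hYeq, ?_⟩
  · exact continuous_iff_continuousAt.2 fun t => (hY' t).continuousAt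
  · intro t ht
    have : max t 0 = t := max_eq_left ht
    have h2 := hY' t
    rw [this] at h2
    rwa [← hYeq t ht] at h2

/-- Uniqueness of solutions of `ẏ = f(y, ū)` from a given initial state. -/
lemma sol_unique (hX : IsOpen X)
    (hfc : ContinuousOn (fun p : EuclideanSpace ℝ (Fin n) × U => f p.1 p.2)
      (X ×ˢ (univ : Set U)))
    (hflip1 : ∀ ξ ∈ X, ∃ V ∈ 𝓝 ξ, ∃ L : ℝ,
      ∀ x ∈ V, ∀ z ∈ V, ‖f x ubar - f z ubar‖ ≤ L * ‖x - z‖)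
    {y₁ y₂ : ℝ → EuclideanSpace ℝ (Fin n)}
    (h₁ : IsSolOn X f (fun _ => ubar) y₁ (Ici 0))
    (h₂ : IsSolOn X f (fun _ => ubar) y₂ (Ici 0))
    (h0 : y₁ 0 = y₂ 0) : ∀ t ≥ (0:ℝ), y₁ t = y₂ t := by
  obtain ⟨Y₁, hc₁, he₁, hd₁⟩ := sol_extend hX hfc h₁
  obtain ⟨Y₂, hc₂, he₂, hd₂⟩ := sol_extend hX hfc h₂
  suffices H : ∀ t ≥ (0:ℝ), Y₁ t = Y₂ t by
    intro t ht; rw [← he₁ t ht, ← he₂ t ht]; exact H t ht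
  intro T hT
  set E : Set ℝ := {t ∈ Icc 0 T | Y₁ t = Y₂ t} with hEdef
  have hEsub : E ⊆ Icc 0 T := fun t ht => ht.1
  have hEne : E.Nonempty := by
    refine ⟨0, ⟨le_refl _, hT⟩, ?_⟩
    rw [he₁ 0 le_rfl, he₂ 0 le_rfl]; exact h0
  have hEclosed : IsClosed E := by
    have : E = Icc 0 T ∩ {t | Y₁ t = Y₂ t} := rfl
    rw [this]
    exact isClosed_Icc.inter (isClosed_eq hc₁ hc₂)
  have hEcpt : IsCompact E := (isCompact_Icc).of_isClosed_subset hEclosed hEsub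
  have hbmem : sSup E ∈ E := hEcpt.sSup_mem hEne
  set b := sSup E with hbdef
  have hb0 : 0 ≤ b := hbmem.1.1
  have hbT : b ≤ T := hbmem.1.2
  rcases eq_or_lt_of_le hbT with hbeq | hblt
  · -- b = T : done
    have := hbmem.2
    rwa [hbeq] at this
  -- b < T : extend equality, contradiction
  exfalso
  have hpX : Y₁ b ∈ X := by rw [he₁ b hb0]; exact h₁.2.1 b hb0
  obtain ⟨V, hV, L, hL⟩ := hflip1 (Y₁ b) hpX
  obtain ⟨ρ, hρ, hball⟩ := Metric.mem_nhds_iff.1 hV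
  have h21 : Y₂ b = Y₁ b := hbmem.2.symm
  have hev₁ : ∀ᶠ t in 𝓝 b, Y₁ t ∈ ball (Y₁ b) ρ :=
    hc₁.continuousAt.preimage_mem_nhds (Metric.ball_mem_nhds _ hρ)
  have hev₂ : ∀ᶠ t in 𝓝 b, Y₂ t ∈ ball (Y₁ b) ρ := by
    have : Y₂ b ∈ ball (Y₁ b) ρ := by rw [h21]; exact Metric.mem_ball_self hρ
    exact hc₂.continuousAt.preimage_mem_nhds (Metric.isOpen_ball.mem_nhds this)
  obtain ⟨η, hη, hηsub⟩ := Metric.mem_nhds_iff.1 (hev₁.and hev₂)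
  set b' := min (b + η / 2) T with hb'def
  have hbb' : b < b' := lt_min (by linarith) hblt
  have hIccsub : Icc b b' ⊆ ball b η := by
    intro t ht
    rw [Real.ball_eq_Ioo]
    constructor
    · linarith [ht.1]
    · have : b' ≤ b + η / 2 := min_le_left _ _
      have := ht.2
      linarith
  have hmem : ∀ t ∈ Icc b b', Y₁ t ∈ ball (Y₁ b) ρ ∧ Y₂ t ∈ ball (Y₁ b) ρ :=
    fun t ht => hηsub (hIccsub ht)
  have hLip : ∀ _t : ℝ, LipschitzOnWith (Real.toNNReal L)
      (fun ξ => f ξ ubar) (ball (Y₁ b) ρ) := by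
    intro _t
    apply LipschitzOnWith.of_dist_le_mul
    intro a ha c hc
    rw [dist_eq_norm, dist_eq_norm, Real.coe_toNNReal']
    calc ‖f a ubar - f c ubar‖ ≤ L * ‖a - c‖ := hL a (hball ha) c (hball hc)
    _ ≤ max L 0 * ‖a - c‖ :=
      mul_le_mul_of_nonneg_right (le_max_left _ _) (norm_nonneg _)
  have key : EqOn Y₁ Y₂ (Icc b b') := by
    apply ODE_solution_unique_of_mem_Icc_right
      (v := fun _ ξ => f ξ ubar) (s := fun _ => ball (Y₁ b) ρ) (fun t _ => hLip t)
      (hc₁.continuousOn) ?_ ?_ (hc₂.continuousOn) ?_ ?_ hbmem.2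
    · intro t ht
      exact (hd₁ t (le_trans hb0 ht.1)).hasDerivWithinAt
    · intro t ht
      exact (hmem t (Ico_subset_Icc_self ht)).1
    · intro t ht
      exact (hd₂ t (le_trans hb0 ht.1)).hasDerivWithinAt
    · intro t ht
      exact (hmem t (Ico_subset_Icc_self ht)).2
  have hb'E : b' ∈ E := ⟨⟨le_trans hb0 (le_of_lt hbb'), min_le_right _ _⟩,
    key ⟨le_of_lt hbb', le_refl _⟩⟩
  exact absurd (le_csSup hEcpt.bddAbove hb'E) (not_le.2 hbb')

/-- Uniform closeness of `f (ξ, μ)` to `f (ξ, ū)` for `ξ` in a compact set and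
`μ` near `ū`, via the tube lemma. -/
lemma unif_small_s2 (hX : IsOpen X)
    (hfc : ContinuousOn (fun p : EuclideanSpace ℝ (Fin n) × U => f p.1 p.2)
      (X ×ˢ (univ : Set U)))
    {C : Set (EuclideanSpace ℝ (Fin n))} (hC : IsCompact C) (hCX : C ⊆ X)
    {ε : ℝ} (hε : 0 < ε) :
    ∃ r > 0, ∀ ξ ∈ C, ∀ μ : U, dist μ ubar < r → ‖f ξ μ - f ξ ubar‖ < ε := by
  have hopen : IsOpen (X ×ˢ (univ : Set U)) := hX.prod isOpen_univ
  have hgc : ContinuousOn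
      (fun p : EuclideanSpace ℝ (Fin n) × U => ‖f p.1 p.2 - f p.1 ubar‖)
      (X ×ˢ (univ : Set U)) := by
    apply ContinuousOn.norm
    apply hfc.sub
    exact ContinuousOn.comp (f := fun p : EuclideanSpace ℝ (Fin n) × U => (p.1, ubar))
      hfc ((continuous_fst.prodMk continuous_const).continuousOn)
      (fun p hp => ⟨hp.1, mem_univ _⟩)
  set W : Set (EuclideanSpace ℝ (Fin n) × U) :=
    (X ×ˢ (univ : Set U)) ∩
      (fun p : EuclideanSpace ℝ (Fin n) × U => ‖f p.1 p.2 - f p.1 ubar‖) ⁻¹' (Iio ε)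
    with hWdef
  have hWopen : IsOpen W := hgc.isOpen_inter_preimage hopen isOpen_Iio
  have hsub : C ×ˢ ({ubar} : Set U) ⊆ W := by
    rintro ⟨ξ, μ⟩ ⟨hξ, hμ⟩
    rcases mem_singleton_iff.1 hμ with rfl
    exact ⟨⟨hCX hξ, mem_univ _⟩, by simp [hε]⟩
  obtain ⟨V₁, V₂, hV₁o, hV₂o, hCV₁, hubV₂, hVW⟩ :=
    generalized_tube_lemma hC isCompact_singleton hWopen hsub
  obtain ⟨r, hr, hball⟩ := Metric.mem_nhds_iff.1 (hV₂o.mem_nhds (hubV₂ rfl))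
  refine ⟨r, hr, fun ξ hξ μ hμ => ?_⟩
  have : (ξ, μ) ∈ W := hVW ⟨hCV₁ hξ, hball hμ⟩
  exact this.2


end Aux

/-- If `u(t) → ū` and `x(·)` is a solution of `ẋ = f(x, u)` on `[0,∞)` whose
image has compact closure contained in the domain of attraction `O`, then
`x(t) → x̄` as `t → ∞`. -/
theorem cics_bounded_trajectory {n : ℕ} {U : Type*} [MetricSpace U]
    (X : Set (EuclideanSpace ℝ (Fin n)))
    (f : EuclideanSpace ℝ (Fin n) → U → EuclideanSpace ℝ (Fin n))
    (xbar : EuclideanSpace ℝ (Fin n)) (ubar : U)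
    (O : Set (EuclideanSpace ℝ (Fin n)))
    -- the state space is open, contains the equilibrium, and `f(x̄, ū) = 0`
    (hX : IsOpen X) (hxbar : xbar ∈ X) (heq : f xbar ubar = 0)
    -- `f` is continuous, and locally Lipschitz in `x` uniformly on compacts of `U`
    (hfc : ContinuousOn (fun p : EuclideanSpace ℝ (Fin n) × U => f p.1 p.2)
      (X ×ˢ (univ : Set U)))
    (hflip : ∀ ξ ∈ X, ∀ K₀ : Set U, IsCompact K₀ → ∃ V ∈ 𝓝 ξ, ∃ L : ℝ,
      ∀ x ∈ V, ∀ z ∈ V, ∀ μ ∈ K₀, ‖f x μ - f z μ‖ ≤ L * ‖x - z‖)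
    -- `x̄` is a stable equilibrium of `ẋ = f(x, ū)` ...
    (hstab : ∀ ε > 0, ∃ δ > 0, ∀ ξ ∈ X, dist ξ xbar ≤ δ →
      ∃ y, IsSolOn X f (fun _ => ubar) y (Ici 0) ∧ y 0 = ξ ∧
        ∀ t ≥ (0:ℝ), dist (y t) xbar < ε)
    -- ... whose domain of attraction is `O`, a neighborhood of `x̄`
    (hO : O = {ξ | ∃ y, IsSolOn X f (fun _ => ubar) y (Ici 0) ∧ y 0 = ξ ∧
      Tendsto y atTop (𝓝 xbar)})
    (hOnhd : O ∈ 𝓝 xbar)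
    (u : ℝ → U) (hu : IsInput u) (hulim : Tendsto u atTop (𝓝 ubar))
    (x : ℝ → EuclideanSpace ℝ (Fin n)) (hx : IsSolOn X f u x (Ici 0))
    (hcpt : IsCompact (closure (x '' Ici 0)))
    (hclO : closure (x '' Ici 0) ⊆ O) :
    Tendsto x atTop (𝓝 xbar) := by
  obtain ⟨hxc, hxX, hxi, hxe⟩ := hx
  set C : Set (EuclideanSpace ℝ (Fin n)) := closure (x '' Ici 0) with hCdef
  have hOX : O ⊆ X := by
    rw [hO]; rintro ξ ⟨y, hy, h0, -⟩; rw [← h0]; exact hy.2.1 0 self_mem_Ici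
  have hCX : C ⊆ X := hclO.trans hOX
  have hxC : ∀ t, 0 ≤ t → x t ∈ C := fun t ht =>
    subset_closure (mem_image_of_mem x ht)
  -- continuity of f(·, ū) on X
  have hfu : ContinuousOn (fun ξ => f ξ ubar) X := by
    exact ContinuousOn.comp (f := fun ξ : EuclideanSpace ℝ (Fin n) => (ξ, ubar))
      hfc ((continuous_id.prodMk continuous_const).continuousOn)
      (fun ξ hξ => ⟨hξ, mem_univ _⟩)
  -- local Lipschitz in x at ū
  have hflip1 : ∀ ξ ∈ X, ∃ V ∈ 𝓝 ξ, ∃ L : ℝ,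
      ∀ a ∈ V, ∀ b ∈ V, ‖f a ubar - f b ubar‖ ≤ L * ‖a - b‖ := by
    intro ξ hξ
    obtain ⟨V, hV, L, hL⟩ := hflip ξ hξ {ubar} isCompact_singleton
    exact ⟨V, hV, L, fun a ha b hb => hL a ha b hb ubar rfl⟩
  have huniq : ∀ {y₁ y₂ : ℝ → EuclideanSpace ℝ (Fin n)},
      IsSolOn X f (fun _ => ubar) y₁ (Ici 0) → IsSolOn X f (fun _ => ubar) y₂ (Ici 0) →
      y₁ 0 = y₂ 0 → ∀ t ≥ (0:ℝ), y₁ t = y₂ t :=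
    fun h₁ h₂ h0 => sol_unique hX hfc hflip1 h₁ h₂ h0
  -- every ū-solution starting in O converges to xbar
  have hattr : ∀ z : ℝ → EuclideanSpace ℝ (Fin n),
      IsSolOn X f (fun _ => ubar) z (Ici 0) → z 0 ∈ O → Tendsto z atTop (𝓝 xbar) := by
    intro z hsol hmem
    rw [hO] at hmem
    obtain ⟨y, hysol, hy0, hytend⟩ := hmem
    exact hytend.congr' ((eventually_ge_atTop 0).mono fun t ht =>
      ((huniq hsol hysol hy0.symm) t ht).symm)
  -- bound on f near C × {ubar}
  obtain ⟨M₀, hM₀⟩ := hcpt.exists_bound_of_continuousOn (hfu.mono hCX)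
  obtain ⟨r₀, hr₀, hrf₀⟩ := unif_small_s2 (ubar := ubar) hX hfc hcpt hCX one_pos
  set M : ℝ := max M₀ 0 + 1 with hMdef
  have hM : 0 < M := by positivity
  have hMb : ∀ ξ ∈ C, ∀ μ : U, dist μ ubar < r₀ → ‖f ξ μ‖ ≤ M := by
    intro ξ hξ μ hμ
    have h1 := hrf₀ ξ hξ μ hμ
    have h2 := hM₀ ξ hξ
    calc ‖f ξ μ‖ = ‖f ξ μ - f ξ ubar + f ξ ubar‖ := by rw [sub_add_cancel]
    _ ≤ ‖f ξ μ - f ξ ubar‖ + ‖f ξ ubar‖ := norm_add_le _ _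
    _ ≤ 1 + max M₀ 0 := add_le_add h1.le (h2.trans (le_max_left _ _))
    _ = M := by rw [hMdef]; ring
  -- the input is eventually close to ubar
  have hureach : ∀ r > (0:ℝ), ∃ T ≥ (0:ℝ), ∀ t ≥ T, dist (u t) ubar < r := by
    intro r hr
    obtain ⟨N, hN⟩ := Metric.tendsto_atTop.1 hulim r hr
    exact ⟨max N 0, le_max_right _ _, fun t ht => hN t (le_trans (le_max_left _ _) ht)⟩
  obtain ⟨T₀, hT₀0, hT₀⟩ := hureach r₀ hr₀
  -- increments of x are given by integrals
  have hxdiff : ∀ a b : ℝ, 0 ≤ a → a ≤ b →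
      x b - x a = ∫ s in a..b, f (x s) (u s) := by
    intro a b ha hab
    have h0b : (0:ℝ) ≤ b := le_trans ha hab
    have hIab : IntervalIntegrable (fun s => f (x s) (u s)) volume a b := by
      apply (hxi b h0b).mono_set
      rw [uIcc_of_le hab, uIcc_of_le h0b]
      exact Icc_subset_Icc ha le_rfl
    have hadd := intervalIntegral.integral_add_adjacent_intervals (hxi a ha) hIab
    rw [hxe a ha, hxe b h0b, ← hadd]
    abel
  -- M-Lipschitz bound on x after time T₀
  have hxlip : ∀ a b : ℝ, T₀ ≤ a → a ≤ b → dist (x b) (x a) ≤ M * (b - a) := by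
    intro a b ha hab
    have ha0 : (0:ℝ) ≤ a := le_trans hT₀0 ha
    rw [dist_eq_norm, hxdiff a b ha0 hab]
    have := intervalIntegral.norm_integral_le_of_norm_le_const
      (C := M) (f := fun s => f (x s) (u s)) (a := a) (b := b) ?_
    · rwa [abs_of_nonneg (by linarith)] at this
    · intro s hs
      rw [uIoc_of_le hab] at hs
      have hs0 : (0:ℝ) ≤ s := le_trans ha0 hs.1.le
      exact hMb _ (hxC s hs0) _ (hT₀ s (le_trans ha hs.1.le))
  have hxlip2 : ∀ c : ℝ, T₀ ≤ c → ∀ s t : ℝ, 0 ≤ s → 0 ≤ t →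
      dist (x (c + s)) (x (c + t)) ≤ M * |s - t| := by
    intro c hc s t hs ht
    rcases le_total s t with h | h
    · rw [dist_comm, abs_sub_comm, abs_of_nonneg (by linarith)]
      have := hxlip (c + s) (c + t) (le_add_of_le_of_nonneg hc hs) (by linarith)
      convert this using 2
      ring
    · rw [abs_of_nonneg (by linarith)]
      have := hxlip (c + t) (c + s) (le_add_of_le_of_nonneg hc ht) (by linarith)
      convert this using 2
      ring
  -- translated integral identity
  have htrans : ∀ c : ℝ, 0 ≤ c → ∀ s : ℝ, 0 ≤ s →
      x (c + s) = x c + ∫ σ in (0:ℝ)..s, f (x (c + σ)) (u (c + σ)) := by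
    intro c hc s hs
    have h1 : (∫ σ in (0:ℝ)..s, f (x (c + σ)) (u (c + σ)))
        = ∫ σ in c..(c + s), f (x σ) (u σ) := by
      have := intervalIntegral.integral_comp_add_left
        (a := (0:ℝ)) (b := s) (fun σ => f (x σ) (u σ)) c
      rw [this, add_zero]
    rw [h1]
    have h2 := hxdiff c (c + s) hc (le_add_of_nonneg_right hs)
    rw [← h2]
    abel
  -- integrability of translates
  have htransint : ∀ c : ℝ, 0 ≤ c → ∀ s : ℝ, 0 ≤ s →
      IntervalIntegrable (fun σ => f (x (c + σ)) (u (c + σ))) volume 0 s := by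
    intro c hc s hs
    have h1 : IntervalIntegrable (fun σ => f (x σ) (u σ)) volume c (c + s) := by
      apply (hxi (c + s) (mem_Ici.2 (by linarith))).mono_set
      rw [uIcc_of_le (by linarith : c ≤ c + s), uIcc_of_le (by linarith : (0:ℝ) ≤ c + s)]
      exact Icc_subset_Icc hc le_rfl
    simpa using h1.comp_add_left c
  -- ####################  ultrafilter limits of translates  ####################
  have hUarg : ∀ c : ℕ → ℝ, (∀ k, 0 ≤ c k) → Tendsto c atTop atTop →
      ∀ 𝒰 : Ultrafilter ℕ, (↑𝒰 : Filter ℕ) ≤ atTop →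
      ∃ z : ℝ → EuclideanSpace ℝ (Fin n), IsSolOn X f (fun _ => ubar) z (Ici 0) ∧
        (∀ s : ℝ, z s ∈ C) ∧
        ∀ s : ℝ, 0 ≤ s → Tendsto (fun k => x (c k + s)) ↑𝒰 (𝓝 (z s)) := by
    intro c hc0 hct 𝒰 h𝒰
    have hTev : ∀ T : ℝ, ∀ᶠ k in (↑𝒰 : Filter ℕ), T ≤ c k :=
      fun T => (hct.eventually_ge_atTop T).filter_mono h𝒰
    -- pointwise ultrafilter limits
    have hlim : ∀ s : ℝ, ∃ p, p ∈ C ∧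
        Tendsto (fun k => x (c k + max s 0)) ↑𝒰 (𝓝 p) := by
      intro s
      set g : ℕ → EuclideanSpace ℝ (Fin n) := fun k => x (c k + max s 0) with hgdef
      have hg : ∀ k, g k ∈ C := fun k =>
        hxC _ (add_nonneg (hc0 k) (le_max_right _ _))
      have hle : (↑(𝒰.map g) : Filter (EuclideanSpace ℝ (Fin n))) ≤ 𝓟 C := by
        rw [Ultrafilter.coe_map]
        exact le_principal_iff.2 (mem_map.2 (by
          have : g ⁻¹' C = univ := eq_univ_of_forall hg
          rw [this]; exact univ_mem))
      obtain ⟨p, hpC, hple⟩ := hcpt.ultrafilter_le_nhds (𝒰.map g) hle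
      refine ⟨p, hpC, ?_⟩
      rwa [Tendsto, ← Ultrafilter.coe_map]
    choose z hzC hztend using hlim
    have hz : ∀ s : ℝ, 0 ≤ s → Tendsto (fun k => x (c k + s)) ↑𝒰 (𝓝 (z s)) := by
      intro s hs
      have := hztend s
      rwa [max_eq_left hs] at this
    -- z is M-Lipschitz on [0, ∞)
    have hzlip : ∀ s t : ℝ, 0 ≤ s → 0 ≤ t → dist (z s) (z t) ≤ M * |s - t| := by
      intro s t hs ht
      refine le_of_tendsto ((hz s hs).dist (hz t ht)) ?_
      filter_upwards [hTev T₀] with k hk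
      exact hxlip2 (c k) hk s t hs ht
    have hzcont : ContinuousOn z (Ici 0) := by
      have : LipschitzOnWith (Real.toNNReal M) z (Ici 0) := by
        apply LipschitzOnWith.of_dist_le_mul
        intro s hs t ht
        rw [Real.coe_toNNReal _ hM.le, Real.dist_eq]
        exact hzlip s t hs ht
      exact this.continuousOn
    have hzX : ∀ s ∈ Ici (0:ℝ), z s ∈ X := fun s _ => hCX (hzC s)
    have hfzc : ContinuousOn (fun σ => f (z σ) ubar) (Ici 0) :=
      hfu.comp hzcont hzX
    -- uniform convergence along the ultrafilter on [0, s]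
    have hunif : ∀ s : ℝ, 0 ≤ s → ∀ ρ > (0:ℝ), ∀ᶠ k in (↑𝒰 : Filter ℕ),
        ∀ σ ∈ Icc (0:ℝ) s, dist (x (c k + σ)) (z σ) < ρ := by
      intro s hs ρ hρ
      rcases eq_or_lt_of_le hs with hs0 | hspos
      · filter_upwards [Metric.tendsto_nhds.1 (hz 0 le_rfl) ρ hρ] with k hk σ hσ
        have : σ = 0 := le_antisymm (hs0 ▸ hσ.2) hσ.1
        rwa [this]
      set N : ℕ := ⌊3 * M * s / ρ⌋₊ + 1 with hNdef
      have hNpos : 0 < (N:ℝ) := by positivity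
      have hMsN : M * (s / N) < ρ / 3 := by
        have h1 : 3 * M * s / ρ < N := by
          rw [hNdef]; push_cast; exact Nat.lt_floor_add_one _
        rw [div_lt_iff₀ hρ] at h1
        rw [mul_div_assoc', div_lt_div_iff₀ hNpos (by norm_num : (0:ℝ) < 3)]
        nlinarith
      have hev1 : ∀ᶠ k in (↑𝒰 : Filter ℕ), ∀ i ∈ Finset.range (N + 1),
          dist (x (c k + i * (s / N))) (z (i * (s / N))) < ρ / 3 := by
        rw [Filter.eventually_all_finset]
        intro i _
        have hσ0 : (0:ℝ) ≤ i * (s / N) := by positivity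
        exact Metric.tendsto_nhds.1 (hz _ hσ0) (ρ / 3) (by positivity)
      filter_upwards [hev1, hTev T₀] with k hk1 hk2 σ hσ
      have hsN : 0 < s / N := by positivity
      set i : ℕ := ⌊σ / (s / N)⌋₊ with hidef
      have hi1 : (i:ℝ) * (s / N) ≤ σ := by
        have h1 : (i:ℝ) ≤ σ / (s / N) := Nat.floor_le (div_nonneg hσ.1 hsN.le)
        rwa [le_div_iff₀ hsN] at h1
      have hi2 : σ - i * (s / N) < s / N := by
        have h1 : σ / (s / N) < i + 1 := Nat.lt_floor_add_one _
        rw [div_lt_iff₀ hsN] at h1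
        push_cast at h1 ⊢
        nlinarith
      have hiN : i ∈ Finset.range (N + 1) := by
        rw [Finset.mem_range, Nat.lt_succ_iff]
        have hNs : (N:ℝ) * (s / N) = s := by field_simp
        have h5 : (i:ℝ) * (s / N) ≤ (N:ℝ) * (s / N) := by
          rw [hNs]; exact hi1.trans hσ.2
        exact_mod_cast le_of_mul_le_mul_right h5 hsN
      have hσ0 : (0:ℝ) ≤ (i:ℝ) * (s / N) := by positivity
      calc dist (x (c k + σ)) (z σ)
          ≤ dist (x (c k + σ)) (x (c k + i * (s / N)))
            + dist (x (c k + i * (s / N))) (z (i * (s / N)))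
            + dist (z (i * (s / N))) (z σ) := dist_triangle4 _ _ _ _
        _ < M * (s / N) + ρ / 3 + M * (s / N) := by
            have hb1 : dist (x (c k + σ)) (x (c k + i * (s / N))) ≤ M * (s / N) := by
              refine (hxlip2 (c k) hk2 σ _ hσ.1 hσ0).trans ?_
              apply mul_le_mul_of_nonneg_left _ hM.le
              rw [abs_of_nonneg (by linarith)]
              linarith
            have hb3 : dist (z (i * (s / N))) (z σ) ≤ M * (s / N) := by
              refine (hzlip _ σ hσ0 hσ.1).trans ?_
              apply mul_le_mul_of_nonneg_left _ hM.le
              rw [abs_of_nonpos (by linarith), neg_sub]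
              linarith
            have hb2 := hk1 i hiN
            linarith
        _ < ρ := by linarith
    -- the integral identity for z
    have hzint : ∀ s : ℝ, 0 ≤ s → z s = z 0 + ∫ σ in (0:ℝ)..s, f (z σ) ubar := by
      intro s hs
      set J : EuclideanSpace ℝ (Fin n) := ∫ σ in (0:ℝ)..s, f (z σ) ubar with hJdef
      have hJint : IntervalIntegrable (fun σ => f (z σ) ubar) volume 0 s := by
        apply ContinuousOn.intervalIntegrable
        apply hfzc.mono
        rw [uIcc_of_le hs]
        exact Icc_subset_Ici_self
      have key : ∀ ε' > (0:ℝ), ‖z s - z 0 - J‖ ≤ 2 * ε' * s := by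
        intro ε' hε'
        obtain ⟨r, hr, hrf⟩ := unif_small_s2 (ubar := ubar) hX hfc hcpt hCX hε'
        have huc := hcpt.uniformContinuousOn_of_continuous (hfu.mono hCX)
        obtain ⟨ρ, hρ, hρf⟩ := Metric.uniformContinuousOn_iff.1 huc ε' hε'
        obtain ⟨Tr, hTr0, hTr⟩ := hureach r hr
        have hlim2 : Tendsto (fun k => ‖x (c k + s) - x (c k) - J‖) ↑𝒰
            (𝓝 ‖z s - z 0 - J‖) := by
          have h1 : Tendsto (fun k => x (c k + s) - x (c k)) ↑𝒰 (𝓝 (z s - z 0)) := by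
            have h2 := (hz s hs).sub (hz 0 le_rfl)
            simpa using h2
          exact ((h1.sub_const J).norm)
        apply le_of_tendsto hlim2
        filter_upwards [hunif s hs ρ hρ, hTev (max T₀ Tr)] with k hk1 hk2
        have hck0 : 0 ≤ c k := le_trans (le_trans hT₀0 (le_max_left _ _)) hk2
        rw [htrans (c k) hck0 s hs]
        have heq2 : x (c k) + (∫ σ in (0:ℝ)..s, f (x (c k + σ)) (u (c k + σ)))
            - x (c k) - J = (∫ σ in (0:ℝ)..s, f (x (c k + σ)) (u (c k + σ))) - J := by
          abel
        rw [heq2, ← intervalIntegral.integral_sub (htransint (c k) hck0 s hs) hJint]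
        have hbound := intervalIntegral.norm_integral_le_of_norm_le_const
          (C := 2 * ε')
          (f := fun σ => f (x (c k + σ)) (u (c k + σ)) - f (z σ) ubar)
          (a := 0) (b := s) ?_
        · rw [abs_of_nonneg (by linarith : (0:ℝ) ≤ s - 0)] at hbound
          calc ‖∫ σ in (0:ℝ)..s, (f (x (c k + σ)) (u (c k + σ)) - f (z σ) ubar)‖
              ≤ 2 * ε' * (s - 0) := hbound
            _ = 2 * ε' * s := by ring
        · intro σ hσ
          rw [uIoc_of_le hs] at hσ
          have hσ0 : (0:ℝ) ≤ σ := hσ.1.le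
          have haC : x (c k + σ) ∈ C := hxC _ (add_nonneg hck0 hσ0)
          have hur : dist (u (c k + σ)) ubar < r := by
            apply hTr
            have : Tr ≤ c k := le_trans (le_max_right _ _) hk2
            linarith
          have h1 : ‖f (x (c k + σ)) (u (c k + σ)) - f (x (c k + σ)) ubar‖ < ε' :=
            hrf _ haC _ hur
          have h2 : dist (f (x (c k + σ)) ubar) (f (z σ) ubar) < ε' :=
            hρf _ haC _ (hzC σ) (hk1 σ ⟨hσ0, hσ.2⟩)
          rw [dist_eq_norm] at h2
          calc ‖f (x (c k + σ)) (u (c k + σ)) - f (z σ) ubar‖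
              ≤ ‖f (x (c k + σ)) (u (c k + σ)) - f (x (c k + σ)) ubar‖
                + ‖f (x (c k + σ)) ubar - f (z σ) ubar‖ := by
                have := norm_sub_le_norm_sub_add_norm_sub
                  (f (x (c k + σ)) (u (c k + σ))) (f (x (c k + σ)) ubar) (f (z σ) ubar)
                exact this
            _ ≤ 2 * ε' := by linarith
      -- conclude the identity
      have hnorm : ‖z s - z 0 - J‖ ≤ 0 := by
        by_contra h
        push_neg at h
        have h1 := key (‖z s - z 0 - J‖ / (2 * s + 1)) (by positivity)
        have h2 : 2 * (‖z s - z 0 - J‖ / (2 * s + 1)) * s < ‖z s - z 0 - J‖ := by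
          rw [show 2 * (‖z s - z 0 - J‖ / (2 * s + 1)) * s
            = ‖z s - z 0 - J‖ * (2 * s) / (2 * s + 1) by ring]
          rw [div_lt_iff₀ (by linarith : (0:ℝ) < 2 * s + 1)]
          nlinarith
        linarith
      have : z s - z 0 - J = 0 := norm_le_zero_iff.1 hnorm
      have : z s - (z 0 + J) = 0 := by rw [← this]; abel
      exact sub_eq_zero.1 this
    -- package
    refine ⟨z, ⟨hzcont, hzX, ?_, fun t ht => hzint t ht⟩, hzC, hz⟩
    · intro t ht
      apply ContinuousOn.intervalIntegrable
      apply hfzc.mono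
      rw [uIcc_of_le ht]
      exact Icc_subset_Ici_self
  -- ####################  step 1: xbar is a limit point of the trajectory  ############
  have hstep1 : ∀ η > (0:ℝ), ∀ T : ℝ, ∃ t ≥ T, dist (x t) xbar < η := by
    intro η hη T
    set 𝒰 : Ultrafilter ℕ := Ultrafilter.of atTop with h𝒰def
    have h𝒰 : (↑𝒰 : Filter ℕ) ≤ atTop := Ultrafilter.of_le _
    obtain ⟨z, hzsol, hzC, hz⟩ := hUarg (fun k => (k:ℝ)) (fun k => Nat.cast_nonneg k)
      tendsto_natCast_atTop_atTop 𝒰 h𝒰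
    have hztend : Tendsto z atTop (𝓝 xbar) := hattr z hzsol (hclO (hzC 0))
    obtain ⟨s₀, hs₀⟩ := Metric.tendsto_atTop.1 hztend (η / 2) (by linarith)
    set s : ℝ := max s₀ 0 with hsdef
    have hzs : dist (z s) xbar < η / 2 := hs₀ s (le_max_left _ _)
    have hk1 : ∀ᶠ (k : ℕ) in (↑𝒰 : Filter ℕ), dist (x ((k:ℝ) + s)) (z s) < η / 2 :=
      Metric.tendsto_nhds.1 (hz s (le_max_right _ _)) (η / 2) (by linarith)
    have hk2 : ∀ᶠ (k : ℕ) in (↑𝒰 : Filter ℕ), T ≤ (k:ℝ) :=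
      (tendsto_natCast_atTop_atTop.eventually_ge_atTop T).filter_mono h𝒰
    obtain ⟨k, hka, hkb⟩ := (hk1.and hk2).exists
    refine ⟨(k:ℝ) + s, by linarith [le_max_right s₀ (0:ℝ)], ?_⟩
    calc dist (x ((k:ℝ) + s)) xbar ≤ dist (x ((k:ℝ) + s)) (z s) + dist (z s) xbar :=
        dist_triangle _ _ _
      _ < η := by linarith
  -- ####################  main argument  ####################
  rw [Metric.tendsto_atTop]
  by_contra hcon
  push_neg at hcon
  obtain ⟨ε, hε, hbad⟩ := hcon
  obtain ⟨δ₀, hδ₀, hstab'⟩ := hstab ε hε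
  set δ : ℝ := min δ₀ (ε / 2) with hδdef
  have hδpos : 0 < δ := lt_min hδ₀ (by linarith)
  have hδε : δ < ε := lt_of_le_of_lt (min_le_right _ _) (by linarith)
  -- crossing times
  have hseq : ∀ k : ℕ, ∃ a b : ℝ, (k:ℝ) ≤ a ∧ a ≤ b ∧
      dist (x a) xbar < δ / 2 ∧ ε ≤ dist (x b) xbar := by
    intro k
    obtain ⟨a, ha, hax⟩ := hstep1 (δ / 2) (by linarith) (k:ℝ)
    obtain ⟨b, hb, hbx⟩ := hbad a
    exact ⟨a, b, ha, hb, hax, hbx⟩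
  choose a b hka hab hax hbx using hseq
  have ha0 : ∀ k, (0:ℝ) ≤ a k := fun k => le_trans (Nat.cast_nonneg k) (hka k)
  -- last crossing of the δ-sphere
  set S : ℕ → Set ℝ := fun k => {t ∈ Icc (a k) (b k) | dist (x t) xbar ≤ δ} with hSdef
  have hScpt : ∀ k, IsCompact (S k) := by
    intro k
    apply isCompact_Icc.of_isClosed_subset _ (sep_subset _ _)
    have hcont : ContinuousOn (fun t => dist (x t) xbar) (Icc (a k) (b k)) := by
      have hsub : Icc (a k) (b k) ⊆ Ici 0 := fun t ht => le_trans (ha0 k) ht.1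
      exact (continuous_id.dist continuous_const).comp_continuousOn (hxc.mono hsub)
    exact hcont.preimage_isClosed_of_isClosed isClosed_Icc isClosed_Iic
  have hSne : ∀ k, (S k).Nonempty := fun k =>
    ⟨a k, ⟨le_rfl, hab k⟩, by linarith [hax k]⟩
  set c : ℕ → ℝ := fun k => sSup (S k) with hcdef
  have hcS : ∀ k, c k ∈ S k := fun k => (hScpt k).sSup_mem (hSne k)
  have hcab : ∀ k, c k ∈ Icc (a k) (b k) := fun k => (hcS k).1
  have hcδ : ∀ k, dist (x (c k)) xbar ≤ δ := fun k => (hcS k).2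
  have hclt : ∀ k, c k < b k := by
    intro k
    rcases lt_or_eq_of_le (hcab k).2 with h | h
    · exact h
    · exfalso
      have := hcδ k
      rw [h] at this
      linarith [hbx k]
  have hcpost : ∀ k, ∀ t, c k < t → t ≤ b k → δ < dist (x t) xbar := by
    intro k t hct htb
    by_contra h
    push_neg at h
    have htS : t ∈ S k := ⟨⟨le_trans (hcab k).1 hct.le, htb⟩, h⟩
    have h9 : t ≤ c k := le_csSup (hScpt k).bddAbove htS
    linarith
  have hc0 : ∀ k, 0 ≤ c k := fun k => le_trans (ha0 k) (hcab k).1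
  have hct : Tendsto c atTop atTop :=
    tendsto_atTop_mono (fun k => le_trans (hka k) (hcab k).1)
      tendsto_natCast_atTop_atTop
  set 𝒰 : Ultrafilter ℕ := Ultrafilter.of atTop with h𝒰def
  have h𝒰 : (↑𝒰 : Filter ℕ) ≤ atTop := Ultrafilter.of_le _
  obtain ⟨z, hzsol, hzC, hz⟩ := hUarg c hc0 hct 𝒰 h𝒰
  have hTev₂ : ∀ᶠ k in (↑𝒰 : Filter ℕ), T₀ ≤ c k :=
    (hct.eventually_ge_atTop T₀).filter_mono h𝒰
  have hz0δ : dist (z 0) xbar ≤ δ := by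
    apply le_of_tendsto ((hz 0 le_rfl).dist tendsto_const_nhds)
    filter_upwards with k
    simpa using hcδ k
  by_cases hA : ∀ s : ℝ, ∀ᶠ k in (↑𝒰 : Filter ℕ), s ≤ b k - c k
  · -- case A: lengths are unbounded along 𝒰
    have hztend : Tendsto z atTop (𝓝 xbar) := hattr z hzsol (hclO (hzC 0))
    obtain ⟨s₀, hs₀⟩ := Metric.tendsto_atTop.1 hztend δ hδpos
    set s : ℝ := max s₀ 1 with hsdef
    have hs1 : (1:ℝ) ≤ s := le_max_right _ _
    have hlow : δ ≤ dist (z s) xbar := by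
      apply ge_of_tendsto ((hz s (by linarith)).dist tendsto_const_nhds)
      filter_upwards [hA s] with k hk
      have h1 : c k < c k + s := by linarith
      have h2 : c k + s ≤ b k := by linarith
      exact (hcpost k (c k + s) h1 h2).le
    have := hs₀ s (le_max_left _ _)
    linarith
  · -- case B: lengths are bounded along 𝒰
    push_neg at hA
    obtain ⟨s₀, hs₀⟩ := hA
    have hB : ∀ᶠ k in (↑𝒰 : Filter ℕ), b k - c k < s₀ := by
      have := hs₀
      filter_upwards [this] with k hk
      exact hk
    set s₁ : ℝ := max s₀ 1 with hs₁def
    have hs₁pos : (0:ℝ) < s₁ := lt_of_lt_of_le one_pos (le_max_right _ _)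
    have hB' : ∀ᶠ k in (↑𝒰 : Filter ℕ), b k - c k < s₁ :=
      hB.mono fun k hk => lt_of_lt_of_le hk (le_max_left _ _)
    set w : ℕ → ℝ := fun k => min (b k - c k) s₁ with hwdef
    have hwmem : ∀ k, w k ∈ Icc (0:ℝ) s₁ := by
      intro k
      constructor
      · exact le_min (by linarith [hclt k]) hs₁pos.le
      · exact min_le_right _ _
    obtain ⟨τ, hτmem, hτ⟩ : ∃ τ ∈ Icc (0:ℝ) s₁, Tendsto w ↑𝒰 (𝓝 τ) := by
      have hle : (↑(𝒰.map w) : Filter ℝ) ≤ 𝓟 (Icc 0 s₁) := by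
        rw [Ultrafilter.coe_map]
        exact le_principal_iff.2 (mem_map.2 (by
          have : w ⁻¹' (Icc 0 s₁) = univ := eq_univ_of_forall hwmem
          rw [this]; exact univ_mem))
      obtain ⟨τ, hτmem, hple⟩ := isCompact_Icc.ultrafilter_le_nhds (𝒰.map w) hle
      exact ⟨τ, hτmem, by rwa [Tendsto, ← Ultrafilter.coe_map]⟩
    have hτ0 : (0:ℝ) ≤ τ := hτmem.1
    -- x (b k) → z τ along 𝒰
    have hxbτ : Tendsto (fun k => x (b k)) ↑𝒰 (𝓝 (z τ)) := by
      rw [tendsto_iff_dist_tendsto_zero]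
      apply squeeze_zero' (Eventually.of_forall fun k => dist_nonneg)
      · show ∀ᶠ k in (↑𝒰 : Filter ℕ),
          dist (x (b k)) (z τ) ≤ M * |w k - τ| + dist (x (c k + τ)) (z τ)
        filter_upwards [hB', hTev₂] with k hk1 hk2
        have hwk : w k = b k - c k := min_eq_left hk1.le
        have hbk : b k = c k + (b k - c k) := by ring
        calc dist (x (b k)) (z τ)
            ≤ dist (x (b k)) (x (c k + τ)) + dist (x (c k + τ)) (z τ) :=
              dist_triangle _ _ _
          _ ≤ M * |w k - τ| + dist (x (c k + τ)) (z τ) := by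
              apply add_le_add_left
              rw [hbk]
              have := hxlip2 (c k) hk2 (b k - c k) τ (by linarith [hclt k]) hτ0
              rwa [hwk]
      · have h1 : Tendsto (fun k => M * |w k - τ|) ↑𝒰 (𝓝 0) := by
          have := ((hτ.sub_const τ).abs).const_mul M
          simpa using this
        have h2 : Tendsto (fun k => dist (x (c k + τ)) (z τ)) ↑𝒰 (𝓝 0) :=
          tendsto_iff_dist_tendsto_zero.1 (hz τ hτ0)
        simpa using h1.add h2
    have hτε : ε ≤ dist (z τ) xbar := by
      apply ge_of_tendsto (hxbτ.dist tendsto_const_nhds)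
      filter_upwards with k
      exact hbx k
    -- stability contradiction
    obtain ⟨y, hysol, hy0, hyb⟩ := hstab' (z 0) (hCX (hzC 0))
      (le_trans hz0δ (min_le_left _ _))
    have heqzy := huniq hzsol hysol hy0.symm
    have := hyb τ hτ0
    rw [← heqzy τ hτ0] at this
    linarith
end
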